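/- arXiv:1201.6152 — 4 statements merged into one kernel-verified Lean document; each statement's English description precedes it below -/
import Mathlib

section
/- Let p > 2 be a prime and let a, b be integers with a > 0, b ≥ 0 and gcd(a, p) = 1, and let r₀ ∈ {0, 1, ..., p-1} satisfy a·r₀ + b ≡ 0 (mod p). Then ∑_{k=1}^{p-1} q^{bk}/[ak]_q ≡ (1-q)·((p-1)/2 − r₀) (mod [p]_q). -/
open Polynomial Finset

noncomputable section

/-- The `q`-integer `[n]_q = 1 + q + ⋯ + q^(n-1)`, as a polynomial in `ℚ[q]`. -/
def qIntP (n : ℕ) : Polynomial ℚ := ∑ i ∈ Finset.range n, X ^ i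

/-- The `q`-integer `[n]_q` viewed in the field of rational functions `ℚ(q)`. -/
def qN (n : ℕ) : RatFunc ℚ := algebraMap (Polynomial ℚ) (RatFunc ℚ) (qIntP n)

/-- The `q`-Pochhammer symbol `(q; q)_n = ∏_{j=1}^{n} (1 - q^j)` in `ℚ(q)`. -/
def qqPoch (n : ℕ) : RatFunc ℚ :=
  algebraMap (Polynomial ℚ) (RatFunc ℚ) (∏ j ∈ Finset.range n, (1 - X ^ (j + 1)))

/-- The `q`-Pochhammer symbol `(-q; q)_n = ∏_{j=1}^{n} (1 + q^j)` in `ℚ(q)`. -/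
def nqPoch (n : ℕ) : RatFunc ℚ :=
  algebraMap (Polynomial ℚ) (RatFunc ℚ) (∏ j ∈ Finset.range n, (1 + X ^ (j + 1)))

/-- The Gaussian `q`-binomial coefficient, as a rational function. -/
def qbin (n k : ℕ) : RatFunc ℚ :=
  if k ≤ n then qqPoch n / (qqPoch k * qqPoch (n - k)) else 0

/-- `qCong p r x y` means `x ≡ y (mod [p]_q^r)`: the difference `x - y` can be
written as a fraction whose numerator (a polynomial) is divisible by `[p]_q^r`
and whose denominator is relatively prime to `[p]_q`. -/
def qCong (p r : ℕ) (x y : RatFunc ℚ) : Prop :=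
  ∃ a b : Polynomial ℚ, IsCoprime b (qIntP p) ∧
    (x - y) * algebraMap (Polynomial ℚ) (RatFunc ℚ) b =
      algebraMap (Polynomial ℚ) (RatFunc ℚ) (qIntP p ^ r * a)


lemma pair_inv_sum {K : Type*} [Field K] {x y : K} (hxy : x * y = 1) (hx : x ≠ 1) (hy : y ≠ 1) :
    (1 - x)⁻¹ + (1 - y)⁻¹ = 1 := by
  have h1 : (1 : K) - x ≠ 0 := sub_ne_zero.2 (Ne.symm hx)
  have h2 : (1 : K) - y ≠ 0 := sub_ne_zero.2 (Ne.symm hy)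
  field_simp
  linear_combination -hxy

lemma pow_mul_inv_sub {K : Type*} [Field K] {x : K} (hx : x ≠ 1) (c : ℕ) :
    x ^ c * (1 - x)⁻¹ = (1 - x)⁻¹ - ∑ i ∈ range c, x ^ i := by
  have h1 : (1 : K) - x ≠ 0 := sub_ne_zero.2 (Ne.symm hx)
  have h := geom_sum_mul x c
  field_simp
  linear_combination -h

lemma sum_Icc_eq_sum_zmod {p : ℕ} [NeZero p] {K : Type*} [AddCommMonoid K] (hp : 1 < p) (f : ZMod p → K) :
    ∑ k ∈ Icc 1 (p - 1), f (k : ZMod p) = ∑ t ∈ (univ : Finset (ZMod p)).erase 0, f t := by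
  refine Finset.sum_nbij' (fun k => (k : ZMod p)) (fun t => t.val) ?_ ?_ ?_ ?_ ?_
  · intro k hk
    simp only [mem_Icc] at hk
    refine mem_erase.2 ⟨fun h => ?_, mem_univ _⟩
    rw [ZMod.natCast_eq_zero_iff] at h
    have := Nat.le_of_dvd (by omega) h
    omega
  · intro t ht
    have h0 : t ≠ 0 := (mem_erase.1 ht).1
    have hv : t.val ≠ 0 := fun h => h0 (ZMod.val_eq_zero t |>.1 h)
    have := t.val_lt
    simp only [mem_Icc]; omega
  · intro k hk
    simp only [mem_Icc] at hk
    exact ZMod.val_natCast_of_lt (by omega)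
  · intro t _
    exact ZMod.natCast_zmod_val t
  · intro k _; rfl

lemma sum_erase_mul_reindex {p : ℕ} [NeZero p] {K : Type*} [AddCommMonoid K]
    (u : ZMod p) (hu : IsUnit u) (f : ZMod p → K) :
    ∑ t ∈ (univ : Finset (ZMod p)).erase 0, f (u * t) =
      ∑ t ∈ (univ : Finset (ZMod p)).erase 0, f t := by
  obtain ⟨v, hv⟩ := hu
  refine Finset.sum_nbij' (fun t => u * t) (fun t => (v⁻¹ : (ZMod p)ˣ) * t) ?_ ?_ ?_ ?_ ?_
  · intro t ht
    refine mem_erase.2 ⟨?_, mem_univ _⟩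
    have := (mem_erase.1 ht).1
    intro h
    apply this
    have : ((v⁻¹ : (ZMod p)ˣ) : ZMod p) * (u * t) = 0 := by
      rw [h, mul_zero]
    rwa [← hv, ← mul_assoc, Units.inv_mul, one_mul] at this
  · intro t ht
    refine mem_erase.2 ⟨?_, mem_univ _⟩
    have h0 := (mem_erase.1 ht).1
    intro h
    apply h0
    have : (v : ZMod p) * (((v⁻¹ : (ZMod p)ˣ) : ZMod p) * t) = 0 := by
      rw [h, mul_zero]
    rwa [← mul_assoc, ← Units.val_mul, mul_inv_cancel, Units.val_one, one_mul] at this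
  · intro t _
    rw [← hv, ← mul_assoc, ← Units.val_mul, inv_mul_cancel, Units.val_one, one_mul]
  · intro t _
    rw [← hv, ← mul_assoc, ← Units.val_mul, mul_inv_cancel, Units.val_one, one_mul]
  · intro t _; rfl

lemma pow_val_natCast {K : Type*} [Monoid K] {p : ℕ} [NeZero p] {ζ : K} (hζp : ζ ^ p = 1)
    (m : ℕ) : ζ ^ m = ζ ^ ((m : ZMod p)).val := by
  conv_lhs => rw [← Nat.div_add_mod m p]
  rw [pow_add, pow_mul, hζp, one_pow, one_mul, ZMod.val_natCast]

lemma zmod_sum_pow {K : Type*} [Field K] {p : ℕ} [NeZero p] {x : K} (hx : x ≠ 1)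
    (hxp : x ^ p = 1) : ∑ t : ZMod p, x ^ t.val = 0 := by
  have h : ∑ t : ZMod p, x ^ t.val = ∑ j ∈ range p, x ^ j := by
    refine Finset.sum_nbij' (fun t => t.val) (fun j => (j : ZMod p)) ?_ ?_ ?_ ?_ ?_
    · intro t _; exact mem_range.2 t.val_lt
    · intro j _; exact mem_univ _
    · intro t _; exact ZMod.natCast_zmod_val t
    · intro j hj; exact ZMod.val_natCast_of_lt (mem_range.1 hj)
    · intro t _; rfl
  rw [h, geom_sum_eq hx, hxp, sub_self, zero_div]

lemma half_sum {K : Type*} [Field K] [CharZero K] {p : ℕ} [NeZero p] (hp : p.Prime) (hp2 : 2 < p)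
    {ζ : K} (hζ : IsPrimitiveRoot ζ p) :
    ∑ t ∈ (univ : Finset (ZMod p)).erase 0, (1 - ζ ^ t.val)⁻¹ = ((p : K) - 1) / 2 := by
  have hne1 : ∀ t : ZMod p, t ≠ 0 → ζ ^ t.val ≠ 1 := by
    intro t ht h
    rw [hζ.pow_eq_one_iff_dvd] at h
    exact ht ((ZMod.val_eq_zero t).1 (Nat.eq_zero_of_dvd_of_lt h t.val_lt))
  set f : ZMod p → K := fun t => (1 - ζ ^ t.val)⁻¹ with hf
  have hre := sum_erase_mul_reindex (p := p) (-1 : ZMod p) isUnit_one.neg f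
  have hpair : ∀ t ∈ (univ : Finset (ZMod p)).erase 0, f t + f (-1 * t) = 1 := by
    intro t ht
    have ht0 : t ≠ 0 := (mem_erase.1 ht).1
    have hxy : ζ ^ t.val * ζ ^ (-t).val = 1 := by
      rw [← pow_add, pow_val_natCast hζ.pow_eq_one (t.val + (-t).val)]
      push_cast [ZMod.natCast_zmod_val]
      simp
    have := pair_inv_sum hxy (hne1 t ht0) (hne1 (-t) (neg_ne_zero.2 ht0))
    simpa [hf, neg_one_mul] using this
  have h2 : (∑ t ∈ (univ : Finset (ZMod p)).erase 0, f t)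
      + (∑ t ∈ (univ : Finset (ZMod p)).erase 0, f t) = (p : K) - 1 := by
    nth_rewrite 2 [← hre]
    rw [← Finset.sum_add_distrib, Finset.sum_congr rfl hpair, Finset.sum_const,
      Finset.card_erase_of_mem (mem_univ 0), card_univ, ZMod.card, nsmul_eq_mul, mul_one,
      Nat.cast_sub hp.one_lt.le, Nat.cast_one]
  linear_combination h2 / 2


lemma key_sum {K : Type*} [Field K] [CharZero K] {p : ℕ} [NeZero p] (hp : p.Prime)
    (hp2 : 2 < p) {ζ : K} (hζ : IsPrimitiveRoot ζ p) (a b r₀ : ℕ)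
    (hap : Nat.gcd a p = 1) (hr₀ : r₀ < p) (hr : (a * r₀ + b) % p = 0) :
    ∑ k ∈ Finset.Icc 1 (p - 1), ζ ^ (b * k) * (1 - ζ ^ (a * k))⁻¹
      = ((p : K) - 1) / 2 - (r₀ : K) := by
  haveI : Fact p.Prime := ⟨hp⟩
  have hne1 : ∀ t : ZMod p, t ≠ 0 → ζ ^ t.val ≠ 1 := by
    intro t ht h
    rw [hζ.pow_eq_one_iff_dvd] at h
    exact ht ((ZMod.val_eq_zero t).1 (Nat.eq_zero_of_dvd_of_lt h t.val_lt))
  -- setup constants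
  set c : ℕ := (p - r₀) % p with hcdef
  have hcp : c < p := Nat.mod_lt _ hp.pos
  have hc : (c : ZMod p) = -(r₀ : ZMod p) := by
    rw [hcdef, ZMod.natCast_mod, Nat.cast_sub hr₀.le, ZMod.natCast_self, zero_sub]
  have hα : (a : ZMod p) ≠ 0 := by
    rw [Ne, ZMod.natCast_eq_zero_iff]
    intro hdvd
    have h1 : p ∣ Nat.gcd a p := Nat.dvd_gcd hdvd dvd_rfl
    rw [hap] at h1
    have := Nat.le_of_dvd one_pos h1
    omega
  have hb : (b : ZMod p) = (a : ZMod p) * (c : ZMod p) := by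
    have h0 : ((a * r₀ + b : ℕ) : ZMod p) = 0 := by
      rw [ZMod.natCast_eq_zero_iff]
      exact Nat.dvd_of_mod_eq_zero hr
    push_cast at h0
    rw [hc]; ring_nf; linear_combination h0
  -- step 1: transport to ZMod
  set g : ZMod p → K := fun t =>
    ζ ^ ((b : ZMod p) * t).val * (1 - ζ ^ ((a : ZMod p) * t).val)⁻¹ with hg
  have step1 : ∑ k ∈ Finset.Icc 1 (p - 1), ζ ^ (b * k) * (1 - ζ ^ (a * k))⁻¹
      = ∑ t ∈ (univ : Finset (ZMod p)).erase 0, g t := by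
    rw [← sum_Icc_eq_sum_zmod hp.one_lt g]
    refine Finset.sum_congr rfl fun k _ => ?_
    rw [hg]
    dsimp only
    rw [pow_val_natCast hζ.pow_eq_one (b * k), pow_val_natCast hζ.pow_eq_one (a * k)]
    push_cast
    rfl
  -- step 2: reindex by multiplication with a⁻¹
  have hu : IsUnit ((a : ZMod p)⁻¹) := isUnit_iff_ne_zero.2 (inv_ne_zero hα)
  have step2 : ∑ t ∈ (univ : Finset (ZMod p)).erase 0, g t
      = ∑ s ∈ (univ : Finset (ZMod p)).erase 0,
          ζ ^ (c * s.val) * (1 - ζ ^ s.val)⁻¹ := by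
    rw [← sum_erase_mul_reindex ((a : ZMod p)⁻¹) hu g]
    refine Finset.sum_congr rfl fun s hs => ?_
    rw [hg]
    dsimp only
    have h1 : (a : ZMod p) * ((a : ZMod p)⁻¹ * s) = s := mul_inv_cancel_left₀ hα s
    have h2 : (b : ZMod p) * ((a : ZMod p)⁻¹ * s) = (c : ZMod p) * s := by
      rw [hb]; field_simp
    rw [h1, h2]
    congr 1
    rw [pow_val_natCast hζ.pow_eq_one (c * s.val)]
    push_cast [ZMod.natCast_zmod_val]
    rfl
  have step3 : ∑ s ∈ (univ : Finset (ZMod p)).erase 0, ζ ^ (c * s.val) * (1 - ζ ^ s.val)⁻¹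
      = (∑ s ∈ (univ : Finset (ZMod p)).erase 0, (1 - ζ ^ s.val)⁻¹)
        - ∑ s ∈ (univ : Finset (ZMod p)).erase 0, ∑ i ∈ range c, (ζ ^ i) ^ s.val := by
    rw [← Finset.sum_sub_distrib]
    refine Finset.sum_congr rfl fun s hs => ?_
    have hx := hne1 s (mem_erase.1 hs).1
    rw [mul_comm c s.val, pow_mul, pow_mul_inv_sub hx c]
    congr 1
    exact Finset.sum_congr rfl fun i _ => by rw [← pow_mul, ← pow_mul, mul_comm]
  rw [step1, step2, step3, half_sum hp hp2 hζ, Finset.sum_comm]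
  have hTi : ∀ i ∈ range c, (∑ s ∈ (univ : Finset (ZMod p)).erase 0, (ζ ^ i) ^ s.val)
      = (if i = 0 then (p : K) else 0) - 1 := by
    intro i hi
    have hfull : ∑ t : ZMod p, (ζ ^ i) ^ t.val = if i = 0 then (p : K) else 0 := by
      by_cases h0 : i = 0
      · simp [h0, Finset.card_univ, ZMod.card]
      · have hx : (ζ : K) ^ i ≠ 1 := by
          intro h
          rw [hζ.pow_eq_one_iff_dvd] at h
          exact h0 (Nat.eq_zero_of_dvd_of_lt h (lt_trans (mem_range.1 hi) hcp))
        have hxp : ((ζ : K) ^ i) ^ p = 1 := by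
          rw [← pow_mul, mul_comm, pow_mul, hζ.pow_eq_one, one_pow]
        rw [zmod_sum_pow hx hxp, if_neg h0]
    have hsplit := Finset.sum_erase_add univ (fun t : ZMod p => (ζ ^ i) ^ t.val) (mem_univ 0)
    have h00 : ((ζ : K) ^ i) ^ ((0 : ZMod p).val) = 1 := by rw [ZMod.val_zero, pow_zero]
    rw [hfull] at hsplit
    simp only [h00] at hsplit
    linear_combination hsplit
  rw [Finset.sum_congr rfl hTi, Finset.sum_sub_distrib, Finset.sum_const, Finset.card_range,
    nsmul_eq_mul, mul_one]
  rcases Nat.eq_zero_or_pos r₀ with h0 | h0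
  · have hc0 : c = 0 := by rw [hcdef, h0, Nat.sub_zero, Nat.mod_self]
    simp [hc0, h0]
  · have hc1 : c = p - r₀ := by rw [hcdef]; exact Nat.mod_eq_of_lt (by omega)
    have hcpos : 0 < c := by omega
    rw [Finset.sum_ite_eq' (range c) 0 (fun _ => (p : K)), if_pos (mem_range.2 hcpos)]
    have : (c : K) = (p : K) - (r₀ : K) := by
      rw [hc1, Nat.cast_sub hr₀.le]
    rw [this]
    ring

lemma qIntP'_ne_zero {m : ℕ} (hm : m ≠ 0) : (∑ i ∈ Finset.range m, (X : Polynomial ℚ) ^ i) ≠ 0 := by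
  intro h
  have := congrArg (Polynomial.eval 1) h
  simp [Polynomial.eval_finset_sum] at this
  exact hm this

lemma aeval_qIntP {K : Type*} [CommRing K] [Algebra ℚ K] (ζ : K) (m : ℕ) :
    Polynomial.aeval ζ (∑ i ∈ Finset.range m, (X : Polynomial ℚ) ^ i) = ∑ i ∈ range m, ζ ^ i := by
  simp

lemma div_mul_mul_cancel'' {F : Type*} [Field F] (x q e : F) (hq : q ≠ 0) :
    x / q * (q * e) = x * e := by
  field_simp

/-- For a prime `p > 2`, integers `a > 0`, `b ≥ 0` with `gcd(a,p) = 1` and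
`r₀ ∈ {0,…,p-1}` with `a r₀ + b ≡ 0 (mod p)`:
`∑_{k=1}^{p-1} q^{bk}/[ak]_q ≡ (1-q)((p-1)/2 − r₀) (mod [p]_q)`. -/
theorem qHarmonic_d1 (p a b : ℕ) (hp : p.Prime) (hp2 : 2 < p)
    (ha : 0 < a) (hap : Nat.gcd a p = 1)
    (r₀ : ℕ) (hr₀ : r₀ < p) (hr : (a * r₀ + b) % p = 0) :
    qCong p 1
      (∑ k ∈ Finset.Icc 1 (p - 1), (RatFunc.X : RatFunc ℚ) ^ (b * k) / qN (a * k))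
      ((1 - RatFunc.X) * RatFunc.C (((p : ℚ) - 1) / 2 - (r₀ : ℚ))) := by
  haveI fp : Fact p.Prime := ⟨hp⟩
  haveI : NeZero p := ⟨hp.pos.ne'⟩
  set n : ℕ+ := ⟨p, hp.pos⟩ with hn
  haveI : NeZero ((n : ℕ) : ℚ) := ⟨by exact_mod_cast hp.pos.ne'⟩
  set K := CyclotomicField n ℚ with hK
  haveI : IsCyclotomicExtension {(n : ℕ)} ℚ K := by
    exact CyclotomicField.isCyclotomicExtension (n : ℕ) ℚ
  set ζ : K := IsCyclotomicExtension.zeta n ℚ K with hzdef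
  have hζ : IsPrimitiveRoot ζ p := IsCyclotomicExtension.zeta_spec n ℚ K
  have hζ1 : ζ ≠ 1 := hζ.ne_one hp.one_lt
  have h1ζ : (1 : K) - ζ ≠ 0 := sub_ne_zero.2 (Ne.symm hζ1)
  have hpa : ¬ p ∣ a := by
    intro hdvd
    have h1 : p ∣ Nat.gcd a p := Nat.dvd_gcd hdvd dvd_rfl
    rw [hap] at h1
    have := Nat.le_of_dvd one_pos h1
    omega
  have hakd : ∀ k ∈ Finset.Icc 1 (p - 1), ¬ p ∣ a * k := by
    intro k hk hdvd
    simp only [Finset.mem_Icc] at hk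
    rcases (Nat.Prime.dvd_mul hp).1 hdvd with h | h
    · exact hpa h
    · have := Nat.le_of_dvd (by omega) h
      omega
  have hz_ak : ∀ k ∈ Finset.Icc 1 (p - 1), ζ ^ (a * k) ≠ 1 := fun k hk h =>
    hakd k hk ((hζ.pow_eq_one_iff_dvd _).1 h)
  have hgeom : ∀ m : ℕ, (1 - ζ) * Polynomial.aeval ζ (qIntP m) = 1 - ζ ^ m := by
    intro m
    rw [qIntP, aeval_qIntP]
    linear_combination -(geom_sum_mul ζ m)
  have hdnz : ∀ k ∈ Finset.Icc 1 (p - 1), Polynomial.aeval ζ (qIntP (a * k)) ≠ 0 := by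
    intro k hk h
    have h2 := hgeom (a * k)
    rw [h, mul_zero] at h2
    exact hz_ak k hk (by linear_combination h2)
  have hdinv : ∀ k ∈ Finset.Icc 1 (p - 1),
      (Polynomial.aeval ζ (qIntP (a * k)))⁻¹ = (1 - ζ) * (1 - ζ ^ (a * k))⁻¹ := by
    intro k hk
    rw [← hgeom (a * k), mul_inv, mul_inv_cancel_left₀ h1ζ]
  set V : K := (1 - ζ) * (((p : K) - 1) / 2 - (r₀ : K)) with hV
  have hkey : ∑ k ∈ Finset.Icc 1 (p - 1),
      ζ ^ (b * k) * (Polynomial.aeval ζ (qIntP (a * k)))⁻¹ = V := by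
    rw [hV, ← key_sum hp hp2 hζ a b r₀ hap hr₀ hr, Finset.mul_sum]
    refine Finset.sum_congr rfl fun k hk => ?_
    rw [hdinv k hk]
    ring
  set D : Polynomial ℚ := ∏ k ∈ Finset.Icc 1 (p - 1), qIntP (a * k) with hD
  set Np : Polynomial ℚ := ∑ k ∈ Finset.Icc 1 (p - 1),
      X ^ (b * k) * ∏ j ∈ (Finset.Icc 1 (p - 1)).erase k, qIntP (a * j) with hNp
  set Tc : Polynomial ℚ := (1 - X) * Polynomial.C (((p : ℚ) - 1) / 2 - (r₀ : ℚ)) with hTc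
  have hDz : Polynomial.aeval ζ D
      = ∏ k ∈ Finset.Icc 1 (p - 1), Polynomial.aeval ζ (qIntP (a * k)) := by
    rw [hD, map_prod]
  have hDnz : Polynomial.aeval ζ D ≠ 0 := by
    rw [hDz]
    exact Finset.prod_ne_zero_iff.2 hdnz
  have hTcz : Polynomial.aeval ζ Tc = V := by
    rw [hTc, hV, map_mul, map_sub, map_one, Polynomial.aeval_X, Polynomial.aeval_C]
    congr 1
    rw [map_sub, map_div₀, map_sub, map_natCast, map_one, map_ofNat, map_natCast]
  have hNz : Polynomial.aeval ζ Np = V * Polynomial.aeval ζ D := by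
    rw [hNp, map_sum, ← hkey, Finset.sum_mul]
    refine Finset.sum_congr rfl fun k hk => ?_
    rw [map_mul, map_pow, Polynomial.aeval_X, map_prod, hDz,
      ← Finset.mul_prod_erase _ _ hk, mul_assoc, inv_mul_cancel_left₀ (hdnz k hk)]
  have hcyc : qIntP p = Polynomial.cyclotomic p ℚ := by
    rw [Polynomial.cyclotomic_prime ℚ p, qIntP]
  have hmin : qIntP p = minpoly ℚ ζ := by
    rw [hcyc]
    exact Polynomial.cyclotomic_eq_minpoly_rat hζ hp.pos
  have haevalsub : Polynomial.aeval ζ (Np - Tc * D) = 0 := by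
    rw [map_sub, map_mul, hNz, hTcz]
    ring
  have hdvd : qIntP p ∣ Np - Tc * D := by
    rw [hmin]
    exact minpoly.dvd ℚ ζ haevalsub
  obtain ⟨A, hA⟩ := hdvd
  have hnotdvd : ¬ qIntP p ∣ D := by
    rintro ⟨E, hE⟩
    apply hDnz
    rw [hE, map_mul]
    have h0 : Polynomial.aeval ζ (qIntP p) = 0 := by
      rw [hmin]
      exact minpoly.aeval ℚ ζ
    rw [h0, zero_mul]
  have hcop : IsCoprime D (qIntP p) := by
    have hirr : Irreducible (qIntP p) := by
      rw [hcyc]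
      exact Polynomial.cyclotomic.irreducible_rat hp.pos
    exact (hirr.coprime_iff_not_dvd.2 hnotdvd).symm
  refine ⟨A, D, hcop, ?_⟩
  rw [pow_one, ← hA]
  have hserm : ∀ k ∈ Finset.Icc 1 (p - 1),
      (RatFunc.X : RatFunc ℚ) ^ (b * k) / qN (a * k) * algebraMap (Polynomial ℚ) (RatFunc ℚ) D
      = algebraMap (Polynomial ℚ) (RatFunc ℚ)
          (X ^ (b * k) * ∏ j ∈ (Finset.Icc 1 (p - 1)).erase k, qIntP (a * j)) := by
    intro k hk
    have hk1 : a * k ≠ 0 := by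
      simp only [Finset.mem_Icc] at hk
      intro h
      rcases Nat.mul_eq_zero.1 h with h | h <;> omega
    have hq : algebraMap (Polynomial ℚ) (RatFunc ℚ) (qIntP (a * k)) ≠ 0 :=
      RatFunc.algebraMap_ne_zero (by rw [qIntP]; exact qIntP'_ne_zero hk1)
    rw [hD, ← Finset.mul_prod_erase _ _ hk,
      map_mul (algebraMap (Polynomial ℚ) (RatFunc ℚ)) (qIntP (a * k))
        (∏ j ∈ (Finset.Icc 1 (p - 1)).erase k, qIntP (a * j)),
      map_mul (algebraMap (Polynomial ℚ) (RatFunc ℚ)) (X ^ (b * k))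
        (∏ j ∈ (Finset.Icc 1 (p - 1)).erase k, qIntP (a * j)),
      map_pow, RatFunc.algebraMap_X]
    simp only [qN]
    exact div_mul_mul_cancel'' _ _ _ hq
  have hS : (∑ k ∈ Finset.Icc 1 (p - 1), (RatFunc.X : RatFunc ℚ) ^ (b * k) / qN (a * k))
      * algebraMap (Polynomial ℚ) (RatFunc ℚ) D = algebraMap (Polynomial ℚ) (RatFunc ℚ) Np := by
    rw [Finset.sum_mul, hNp, map_sum]
    exact Finset.sum_congr rfl hserm
  have hT : ((1 - RatFunc.X) * RatFunc.C (((p : ℚ) - 1) / 2 - (r₀ : ℚ)))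
      * algebraMap (Polynomial ℚ) (RatFunc ℚ) D
      = algebraMap (Polynomial ℚ) (RatFunc ℚ) (Tc * D) := by
    rw [hTc]
    simp only [map_mul, map_sub, map_one, RatFunc.algebraMap_X, RatFunc.algebraMap_C]
  rw [sub_mul, hS, hT, ← map_sub]
end
end

section
/- Let p > 2 be a prime and let a, b be integers with a > 0, b ≥ 0 and gcd(a, p) = 1, and let r₀ ∈ {0, 1, ..., p-1} satisfy a·r₀ + b ≡ 0 (mod p). Then ∑_{k=1}^{p-1} q^{bk}/[ak]_q^2 ≡ (1-q)^2·( −(p-1)(p-5)/12 + r₀(p-2-r₀)/2 ) (mod [p]_q). -/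
open Polynomial Finset

noncomputable section

lemma sumIcc1 (n : ℕ) : ∑ i ∈ Icc 1 n, (i:ℚ) = n*(n+1)/2 := by
  induction n with
  | zero => simp
  | succ n ih => rw [Finset.sum_Icc_succ_top (by omega), ih]; push_cast; ring

lemma sumIcc2 (n : ℕ) : ∑ i ∈ Icc 1 n, (i:ℚ)^2 = n*(n+1)*(2*n+1)/6 := by
  induction n with
  | zero => simp
  | succ n ih => rw [Finset.sum_Icc_succ_top (by omega), ih]; push_cast; ring

lemma ioc_icc (n : ℕ) : Ioc 0 n = Icc 1 n := (Finset.Icc_add_one_left_eq_Ioc 0 n).symm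

lemma sumIoc1 {m n : ℕ} (h : m ≤ n) :
    ∑ i ∈ Ioc m n, (i:ℚ) = n*(n+1)/2 - m*(m+1)/2 := by
  have := Finset.sum_Ioc_consecutive (fun i => (i:ℚ)) (Nat.zero_le m) h
  rw [ioc_icc, ioc_icc, sumIcc1, sumIcc1] at this
  linarith

lemma sumIoc2 {m n : ℕ} (h : m ≤ n) :
    ∑ i ∈ Ioc m n, (i:ℚ)^2 = n*(n+1)*(2*n+1)/6 - m*(m+1)*(2*m+1)/6 := by
  have := Finset.sum_Ioc_consecutive (fun i => (i:ℚ)^2) (Nat.zero_le m) h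
  rw [ioc_icc, ioc_icc, sumIcc2, sumIcc2] at this
  linarith

lemma modhelper {p m : ℕ} (h0 : 0 < p) (h : m < 2*p) :
    m % p = if m < p then m else m - p := by
  split_ifs with h1
  · exact Nat.mod_eq_of_lt h1
  · rw [Nat.mod_eq_sub_mod (by omega), Nat.mod_eq_of_lt (by omega)]

lemma condlem (p a b : ℕ) (hp : p.Prime) (hap : Nat.gcd a p = 1)
    (r₀ : ℕ) (hr₀ : r₀ < p) (hr : (a * r₀ + b) % p = 0) (m : ℕ) :
    (b + a * m) % p = 0 ↔ m % p = r₀ % p := by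
  haveI : Fact p.Prime := ⟨hp⟩
  have ha0 : (a : ZMod p) ≠ 0 := by
    rw [Ne, ZMod.natCast_eq_zero_iff]
    intro hd
    have h2 := hp.two_le
    have := Nat.gcd_eq_right hd
    omega
  have hr' : (a : ZMod p) * r₀ + b = 0 := by
    have : ((a * r₀ + b : ℕ) : ZMod p) = 0 := by
      rw [ZMod.natCast_eq_zero_iff]; exact Nat.dvd_of_mod_eq_zero hr
    push_cast at this; linear_combination this
  rw [← Nat.dvd_iff_mod_eq_zero, ← ZMod.natCast_eq_zero_iff,
    ← ZMod.natCast_eq_natCast_iff']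
  push_cast
  constructor
  · intro h
    have : (a : ZMod p) * (m - r₀) = 0 := by linear_combination h - hr'
    rcases mul_eq_zero.mp this with h' | h'
    · exact absurd h' ha0
    · linear_combination h'
  · intro h; rw [h]; linear_combination hr'

lemma starQ (p a b : ℕ) (hp : p.Prime) (hap : Nat.gcd a p = 1)
    (r₀ : ℕ) (hr₀ : r₀ < p) (hr : (a * r₀ + b) % p = 0) :
    ∑ i ∈ Icc 1 (p-1), ∑ j ∈ Icc 1 (p-1),
        (i:ℚ) * (j:ℚ) * (if (b + a*(i+j)) % p = 0 then (p:ℚ)-1 else -1)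
      = (p:ℚ)^2 * (-(((p:ℚ)-1)*((p:ℚ)-5))/12 + (r₀:ℚ)*((p:ℚ)-2-(r₀:ℚ))/2) := by
  have hp1 : 1 ≤ p := hp.one_lt.le
  have hp0 : 0 < p := hp.pos
  have hcond : ∀ i j : ℕ, ((b + a*(i+j)) % p = 0) = ((i+j) % p = r₀) := by
    intro i j
    rw [condlem p a b hp hap r₀ hr₀ hr (i+j), Nat.mod_eq_of_lt hr₀]
  simp only [hcond]
  set P := (p:ℚ) with hP
  set R := (r₀:ℚ) with hR
  have key : ∀ i ∈ Icc 1 (p-1),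
      (∑ j ∈ Icc 1 (p-1), (i:ℚ) * (j:ℚ) * (if (i+j) % p = r₀ then P-1 else -1))
        = P * ((i:ℚ) * ((if i ≤ r₀ then r₀ - i else r₀ + p - i : ℕ) : ℚ))
          - (i:ℚ) * ((p-1:ℕ)*((p-1:ℕ)+1)/2 : ℚ) := by
    intro i hi
    rw [Finset.mem_Icc] at hi
    set jv := (if i ≤ r₀ then r₀ - i else r₀ + p - i : ℕ) with hjv
    have hiff : ∀ j ∈ Icc 1 (p-1), ((i+j) % p = r₀) = (j = jv) := by
      intro j hj
      rw [Finset.mem_Icc] at hj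
      rw [modhelper hp0 (by omega), hjv]
      apply propext
      constructor
      · intro h; split_ifs at h ⊢ <;> omega
      · intro h; split_ifs at h ⊢ <;> omega
    have hJ : (∑ j ∈ Icc 1 (p-1), if (i+j) % p = r₀ then (j:ℚ) else 0) = (jv:ℚ) := by
      rw [Finset.sum_congr rfl (fun j hj => by simp only [hiff j hj] :
            ∀ j ∈ Icc 1 (p-1), (if (i+j) % p = r₀ then (j:ℚ) else 0)
              = (if j = jv then (j:ℚ) else 0)),
        Finset.sum_ite_eq' (Icc 1 (p-1))]
      by_cases hir : i = r₀
      · have h0 : jv = 0 := by rw [hjv]; simp [hir]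
        rw [h0]; simp
      · rw [if_pos (by rw [Finset.mem_Icc, hjv]; split_ifs <;> omega)]
    have hsplit : ∀ j : ℕ, (i:ℚ) * (j:ℚ) * (if (i+j) % p = r₀ then P-1 else -1)
        = (if (i+j) % p = r₀ then (j:ℚ) else 0) * (P * i) - (i:ℚ) * (j:ℚ) := by
      intro j; split_ifs <;> ring
    rw [Finset.sum_congr rfl (fun j _ => hsplit j), Finset.sum_sub_distrib,
      ← Finset.sum_mul, ← Finset.mul_sum, sumIcc1, hJ]
    ring
  rw [Finset.sum_congr rfl key, Finset.sum_sub_distrib, ← Finset.sum_mul, ← Finset.mul_sum,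
    sumIcc1]
  have hA : ∑ i ∈ Icc 1 (p-1), ((i:ℚ) * ((if i ≤ r₀ then r₀ - i else r₀ + p - i : ℕ) : ℚ))
      = (∑ i ∈ Ioc 0 r₀, ((i:ℚ) * ((if i ≤ r₀ then r₀ - i else r₀ + p - i : ℕ) : ℚ)))
        + ∑ i ∈ Ioc r₀ (p-1), ((i:ℚ) * ((if i ≤ r₀ then r₀ - i else r₀ + p - i : ℕ) : ℚ)) := by
    rw [← ioc_icc]
    exact (Finset.sum_Ioc_consecutive _ (Nat.zero_le r₀) (by omega)).symm
  have h1 : ∑ i ∈ Ioc 0 r₀, ((i:ℚ) * ((if i ≤ r₀ then r₀ - i else r₀ + p - i : ℕ) : ℚ))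
      = R * (R*(R+1)/2) - R*(R+1)*(2*R+1)/6 := by
    rw [Finset.sum_congr rfl (fun i hi => by
        rw [Finset.mem_Ioc] at hi
        rw [if_pos hi.2, Nat.cast_sub hi.2]
        ring :
      ∀ i ∈ Ioc 0 r₀, ((i:ℚ) * ((if i ≤ r₀ then r₀ - i else r₀ + p - i : ℕ) : ℚ))
        = R * (i:ℚ) - (i:ℚ)^2)]
    rw [Finset.sum_sub_distrib, ← Finset.mul_sum, ioc_icc, sumIcc1, sumIcc2, hR]
  have h2 : ∑ i ∈ Ioc r₀ (p-1), ((i:ℚ) * ((if i ≤ r₀ then r₀ - i else r₀ + p - i : ℕ) : ℚ))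
      = (R+P) * ((p-1:ℕ)*((p-1:ℕ)+1)/2 - R*(R+1)/2)
        - ((p-1:ℕ)*((p-1:ℕ)+1)*(2*(p-1:ℕ)+1)/6 - R*(R+1)*(2*R+1)/6) := by
    rw [Finset.sum_congr rfl (fun i hi => by
        rw [Finset.mem_Ioc] at hi
        rw [if_neg (by omega), Nat.cast_sub (by omega)]
        push_cast
        ring :
      ∀ i ∈ Ioc r₀ (p-1), ((i:ℚ) * ((if i ≤ r₀ then r₀ - i else r₀ + p - i : ℕ) : ℚ))
        = (R+P) * (i:ℚ) - (i:ℚ)^2)]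
    rw [Finset.sum_sub_distrib, ← Finset.mul_sum, sumIoc1 (by omega), sumIoc2 (by omega), hR, hP]
  rw [hA, h1, h2]
  have hc : ((p - 1 : ℕ) : ℚ) = P - 1 := by
    rw [hP, Nat.cast_sub hp1]; rfl
  rw [hc]
  ring
variable {K : Type*} [Field K]

lemma telesc (x : K) (n : ℕ) :
    (1 - x) * ∑ j ∈ range n, (j:K) * x^j = (∑ j ∈ range n, x^j) - 1 - ((n:K)-1)*x^n := by
  induction n with
  | zero => simp
  | succ n ih =>
    rw [Finset.sum_range_succ, Finset.sum_range_succ, mul_add, ih]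
    push_cast; ring

lemma geom_zero {x : K} (hx : x ≠ 1) {p : ℕ} (hxp : x^p = 1) :
    ∑ j ∈ range p, x^j = 0 := by
  have h := geom_sum_mul x p
  rw [hxp, sub_self] at h
  exact (mul_eq_zero.mp h).resolve_right (sub_ne_zero.mpr hx)

lemma winv {x : K} (hx : x ≠ 1) {p : ℕ} (hxp : x^p = 1) :
    (1 - x) * ∑ j ∈ range p, (j:K) * x^j = -(p:K) := by
  rw [telesc, geom_zero hx hxp, hxp]; ring

lemma insert_icc {p : ℕ} (hp : 0 < p) : insert 0 (Icc 1 (p-1)) = range p := by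
  ext x; simp only [Finset.mem_insert, Finset.mem_Icc, Finset.mem_range]; omega

lemma range_to_icc {p : ℕ} (hp : 0 < p) (f : ℕ → K) (h0 : f 0 = 0) :
    ∑ j ∈ range p, f j = ∑ j ∈ Icc 1 (p-1), f j := by
  rw [← insert_icc hp, Finset.sum_insert (by simp), h0, zero_add]

lemma geomIcc {p : ℕ} (hp : 0 < p) {ζ : K} (hζ : IsPrimitiveRoot ζ p) (m : ℕ) :
    ∑ k ∈ Icc 1 (p-1), (ζ^m)^k = if p ∣ m then (p:K)-1 else -1 := by
  have hrange : ∑ k ∈ range p, (ζ^m)^k = 1 + ∑ k ∈ Icc 1 (p-1), (ζ^m)^k := by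
    rw [← insert_icc hp, Finset.sum_insert (by simp), pow_zero]
  split_ifs with hd
  · have h1 : ζ^m = 1 := hζ.pow_eq_one_iff_dvd m |>.mpr hd
    rw [h1]
    simp only [one_pow, Finset.sum_const, nsmul_eq_mul, mul_one, Nat.card_Icc]
    have : ((p - 1 + 1 - 1 : ℕ) : K) = (p:K) - 1 := by
      have : (p - 1 + 1 - 1 : ℕ) = p - 1 := by omega
      rw [this, Nat.cast_sub hp]; simp
    rw [this]
  · have h1 : ζ^m ≠ 1 := fun h => hd ((hζ.pow_eq_one_iff_dvd m).mp h)
    have hxp : (ζ^m)^p = 1 := by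
      rw [← pow_mul, mul_comm, pow_mul, hζ.pow_eq_one, one_pow]
    have := geom_zero h1 hxp
    rw [hrange] at this
    linear_combination this

lemma keyK {K : Type*} [Field K] [CharZero K] (p a b : ℕ) (hp : p.Prime)
    (ha : 0 < a) (hap : Nat.gcd a p = 1)
    (r₀ : ℕ) (hr₀ : r₀ < p) (hr : (a * r₀ + b) % p = 0)
    {ζ : K} (hζ : IsPrimitiveRoot ζ p) :
    ∑ k ∈ Icc 1 (p-1), ζ^(b*k) * ((1 - ζ^(a*k))⁻¹)^2
      = algebraMap ℚ K (-(((p:ℚ)-1)*((p:ℚ)-5))/12 + (r₀:ℚ)*((p:ℚ)-2-(r₀:ℚ))/2) := by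
  have hp0 : 0 < p := hp.pos
  have hpa : ¬ p ∣ a := by
    intro hd
    have h2 := hp.two_le
    have := Nat.gcd_eq_right hd
    omega
  have hterm : ∀ k ∈ Icc 1 (p-1), (p:K)^2 * (ζ^(b*k) * ((1 - ζ^(a*k))⁻¹)^2)
      = ∑ i ∈ Icc 1 (p-1), ∑ j ∈ Icc 1 (p-1),
          (i:K)*(j:K) * (ζ^(b+a*(i+j)))^k := by
    intro k hk
    rw [Finset.mem_Icc] at hk
    have hdk : ¬ p ∣ a * k := by
      intro hd
      rcases (Nat.Prime.dvd_mul hp).mp hd with h | h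
      · exact hpa h
      · have := Nat.le_of_dvd (by omega) h; omega
    have hx1 : ζ^(a*k) ≠ 1 := fun h => hdk ((hζ.pow_eq_one_iff_dvd _).mp h)
    have hxp : (ζ^(a*k))^p = 1 := by
      rw [← pow_mul, mul_comm, pow_mul, hζ.pow_eq_one, one_pow]
    have hW := winv hx1 hxp
    have hx0 : (1 : K) - ζ^(a*k) ≠ 0 := sub_ne_zero.mpr (Ne.symm hx1)
    have hinv : (p:K) * (1 - ζ^(a*k))⁻¹ = -(∑ j ∈ range p, (j:K)*(ζ^(a*k))^j) := by
      rw [mul_inv_eq_iff_eq_mul₀ hx0]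
      linear_combination hW
    have step1 : (p:K)^2 * (ζ^(b*k) * ((1 - ζ^(a*k))⁻¹)^2)
        = ζ^(b*k) * ((p:K) * (1 - ζ^(a*k))⁻¹)^2 := by ring
    rw [step1, hinv, neg_sq,
      range_to_icc hp0 (fun j => (j:K)*(ζ^(a*k))^j) (by simp)]
    rw [sq, Finset.sum_mul_sum, Finset.mul_sum]
    apply Finset.sum_congr rfl
    intro i _
    rw [Finset.mul_sum]
    apply Finset.sum_congr rfl
    intro j _
    have hpow : ζ^(b*k) * ((i:K) * (ζ^(a*k))^i * ((j:K) * (ζ^(a*k))^j))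
        = (i:K)*(j:K) * (ζ^(b*k) * ζ^(a*k*i) * ζ^(a*k*j)) := by
      rw [← pow_mul, ← pow_mul]; ring
    rw [hpow, ← pow_add, ← pow_add]
    congr 1
    rw [← pow_mul]
    congr 1
    ring
  -- sum over k
  have hsum : (p:K)^2 * (∑ k ∈ Icc 1 (p-1), ζ^(b*k) * ((1 - ζ^(a*k))⁻¹)^2)
      = ∑ i ∈ Icc 1 (p-1), ∑ j ∈ Icc 1 (p-1),
          (i:K)*(j:K) * (if (b+a*(i+j)) % p = 0 then (p:K)-1 else -1) := by
    rw [Finset.mul_sum, Finset.sum_congr rfl hterm, Finset.sum_comm]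
    apply Finset.sum_congr rfl
    intro i _
    rw [Finset.sum_comm]
    apply Finset.sum_congr rfl
    intro j _
    rw [← Finset.mul_sum, geomIcc hp0 hζ]
    simp only [Nat.dvd_iff_mod_eq_zero]
  have htrans : ∑ i ∈ Icc 1 (p-1), ∑ j ∈ Icc 1 (p-1),
          (i:K)*(j:K) * (if (b+a*(i+j)) % p = 0 then (p:K)-1 else -1)
      = algebraMap ℚ K (∑ i ∈ Icc 1 (p-1), ∑ j ∈ Icc 1 (p-1),
          (i:ℚ)*(j:ℚ) * (if (b+a*(i+j)) % p = 0 then (p:ℚ)-1 else -1)) := by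
    rw [map_sum]
    apply Finset.sum_congr rfl
    intro i _
    rw [map_sum]
    apply Finset.sum_congr rfl
    intro j _
    rw [map_mul, map_mul, map_natCast, map_natCast, apply_ite (algebraMap ℚ K),
      map_sub, map_natCast, map_one, map_neg, map_one]
  rw [htrans, starQ p a b hp hap r₀ hr₀ hr] at hsum
  have hp2 : ((p:K))^2 ≠ 0 :=
    pow_ne_zero 2 (Nat.cast_ne_zero.mpr hp0.ne')
  apply mul_left_cancel₀ hp2
  rw [hsum, map_mul, map_pow, map_natCast]

/-- For a prime `p > 2`, integers `a > 0`, `b ≥ 0` with `gcd(a,p) = 1` and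
`r₀ ∈ {0,…,p-1}` with `a r₀ + b ≡ 0 (mod p)`:
`∑_{k=1}^{p-1} q^{bk}/[ak]_q² ≡ (1-q)²(−(p-1)(p-5)/12 + r₀(p-2-r₀)/2) (mod [p]_q)`. -/
theorem qHarmonic_d2 (p a b : ℕ) (hp : p.Prime) (hp2 : 2 < p)
    (ha : 0 < a) (hap : Nat.gcd a p = 1)
    (r₀ : ℕ) (hr₀ : r₀ < p) (hr : (a * r₀ + b) % p = 0) :
    qCong p 1
      (∑ k ∈ Finset.Icc 1 (p - 1), (RatFunc.X : RatFunc ℚ) ^ (b * k) / qN (a * k) ^ 2)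
      ((1 - RatFunc.X) ^ 2 *
        RatFunc.C (-(((p : ℚ) - 1) * ((p : ℚ) - 5)) / 12 +
          (r₀ : ℚ) * ((p : ℚ) - 2 - (r₀ : ℚ)) / 2)) := by
  classical
  have hp0 : 0 < p := hp.pos
  set c : ℚ := -(((p : ℚ) - 1) * ((p : ℚ) - 5)) / 12 +
      (r₀ : ℚ) * ((p : ℚ) - 2 - (r₀ : ℚ)) / 2 with hc
  set φ := algebraMap (Polynomial ℚ) (RatFunc ℚ) with hφ
  haveI : Fact p.Prime := ⟨hp⟩
  set pn : ℕ+ := ⟨p, hp0⟩ with hpn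
  set K := CyclotomicField pn ℚ with hK
  set ζ : K := @IsCyclotomicExtension.zeta pn _ ℚ K _ _ _
    (CyclotomicField.isCyclotomicExtension (pn : ℕ) ℚ) with hζdef
  have hζ : IsPrimitiveRoot ζ p := @IsCyclotomicExtension.zeta_spec pn _ ℚ K _ _ _
    (CyclotomicField.isCyclotomicExtension (pn : ℕ) ℚ)
  haveI : CharZero K := charZero_of_injective_algebraMap (algebraMap ℚ K).injective
  have hΦ : qIntP p = Polynomial.cyclotomic p ℚ := by
    rw [Polynomial.cyclotomic_prime]; rfl
  have hmin : qIntP p = minpoly ℚ ζ :=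
    hΦ.trans (Polynomial.cyclotomic_eq_minpoly_rat hζ hp0)
  have hΦ0 : (Polynomial.aeval ζ) (qIntP p) = 0 := by rw [hmin]; exact minpoly.aeval ℚ ζ
  have hEval : ∀ n, (Polynomial.aeval ζ) (qIntP n) = ∑ i ∈ range n, ζ ^ i := by
    intro n; simp [qIntP, map_sum]
  have hζ1 : ζ ≠ 1 := hζ.ne_one hp.one_lt
  have h1ζ : (1 : K) - ζ ≠ 0 := sub_ne_zero.mpr (Ne.symm hζ1)
  have hpa : ¬ p ∣ a := by
    intro hd
    have h2 := hp.two_le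
    have := Nat.gcd_eq_right hd
    omega
  have hdk : ∀ k ∈ Icc 1 (p - 1), ¬ p ∣ a * k := by
    intro k hk hd
    rw [Finset.mem_Icc] at hk
    rcases (Nat.Prime.dvd_mul hp).mp hd with h | h
    · exact hpa h
    · have := Nat.le_of_dvd (by omega) h; omega
  -- the evaluated q-integers
  have hgeom : ∀ k ∈ Icc 1 (p - 1),
      (1 - ζ) * (Polynomial.aeval ζ) (qIntP (a * k)) = 1 - ζ ^ (a * k) := by
    intro k hk
    rw [hEval]
    have := geom_sum_mul ζ (a * k)
    linear_combination -this
  have hxk1 : ∀ k ∈ Icc 1 (p - 1), (1 : K) - ζ ^ (a * k) ≠ 0 := by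
    intro k hk
    refine sub_ne_zero.mpr (Ne.symm fun h => hdk k hk ((hζ.pow_eq_one_iff_dvd _).mp h))
  have hqne : ∀ k ∈ Icc 1 (p - 1), (Polynomial.aeval ζ) (qIntP (a * k)) ≠ 0 := by
    intro k hk h0
    apply hxk1 k hk
    rw [← hgeom k hk, h0, mul_zero]
  -- the witness denominator
  set B : Polynomial ℚ := ∏ k ∈ Icc 1 (p - 1), qIntP (a * k) ^ 2 with hB
  have hBeval : (Polynomial.aeval ζ) B ≠ 0 := by
    rw [hB, map_prod]
    refine Finset.prod_ne_zero_iff.mpr fun k hk => ?_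
    rw [map_pow]
    exact pow_ne_zero 2 (hqne k hk)
  have hcop : IsCoprime B (qIntP p) := by
    have hirr : Irreducible (qIntP p) := hΦ ▸ Polynomial.cyclotomic.irreducible_rat hp0
    rcases EuclideanDomain.dvd_or_coprime (qIntP p) B hirr with h | h
    · exfalso
      obtain ⟨d, hd⟩ := h
      rw [hd, map_mul, hΦ0, zero_mul] at hBeval
      exact hBeval rfl
    · exact h.symm
  set N : Polynomial ℚ := ∑ k ∈ Icc 1 (p - 1),
      Polynomial.X ^ (b * k) * ∏ l ∈ (Icc 1 (p - 1)).erase k, qIntP (a * l) ^ 2 with hN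
  set yP : Polynomial ℚ := (1 - Polynomial.X) ^ 2 * Polynomial.C c with hyP
  have hdvd : qIntP p ∣ N - yP * B := by
    rw [hmin]
    apply minpoly.dvd
    rw [map_sub, sub_eq_zero, hN, hyP, map_sum, map_mul, map_mul]
    have hkey := keyK p a b hp ha hap r₀ hr₀ hr hζ
    have hterm : ∀ k ∈ Icc 1 (p - 1),
        (Polynomial.aeval ζ) (Polynomial.X ^ (b * k) *
            ∏ l ∈ (Icc 1 (p - 1)).erase k, qIntP (a * l) ^ 2)
          = ((1 - ζ) ^ 2 * (ζ ^ (b * k) * ((1 - ζ ^ (a * k))⁻¹) ^ 2)) *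
              (Polynomial.aeval ζ) B := by
      intro k hk
      rw [map_mul, map_pow, Polynomial.aeval_X, hB, map_prod, map_prod]
      have hsplit : ∏ l ∈ Icc 1 (p - 1), (Polynomial.aeval ζ) (qIntP (a * l) ^ 2)
          = (Polynomial.aeval ζ) (qIntP (a * k) ^ 2) *
              ∏ l ∈ (Icc 1 (p - 1)).erase k, (Polynomial.aeval ζ) (qIntP (a * l) ^ 2) :=
        (Finset.mul_prod_erase _ _ hk).symm
      rw [hsplit, map_pow]
      have hEk : (Polynomial.aeval ζ) (qIntP (a * k))
          = (1 - ζ ^ (a * k)) * ((1 - ζ)⁻¹) := by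
        rw [← hgeom k hk]
        rw [mul_comm (1 - ζ), mul_inv_cancel_right₀ h1ζ]
      rw [hEk]
      have hx := hxk1 k hk
      have e1 : (1 - ζ ^ (a * k)) * (1 - ζ ^ (a * k))⁻¹ = 1 := mul_inv_cancel₀ hx
      have e2 : (1 - ζ) * (1 - ζ)⁻¹ = 1 := mul_inv_cancel₀ h1ζ
      linear_combination
        (-(ζ ^ (b * k) * (∏ l ∈ (Icc 1 (p - 1)).erase k, (Polynomial.aeval ζ) (qIntP (a * l) ^ 2)) *
          ((1 - ζ) * (1 - ζ)⁻¹) ^ 2 * ((1 - ζ ^ (a * k)) * (1 - ζ ^ (a * k))⁻¹ + 1))) * e1 +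
        (-(ζ ^ (b * k) * (∏ l ∈ (Icc 1 (p - 1)).erase k, (Polynomial.aeval ζ) (qIntP (a * l) ^ 2)) *
          ((1 - ζ) * (1 - ζ)⁻¹ + 1))) * e2
    rw [Finset.sum_congr rfl hterm, ← Finset.sum_mul]
    congr 1
    rw [← Finset.mul_sum, hkey]
    have : (Polynomial.aeval ζ) ((1 - Polynomial.X : Polynomial ℚ) ^ 2)
        = (1 - ζ) ^ 2 := by
      rw [map_pow, map_sub, map_one, Polynomial.aeval_X]
    rw [this, Polynomial.aeval_C]
  obtain ⟨A, hA⟩ := hdvd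
  refine ⟨A, B, hcop, ?_⟩
  rw [pow_one, ← hA]
  -- now pure RatFunc computation
  have hφX : φ Polynomial.X = RatFunc.X := RatFunc.algebraMap_X
  have hqN0 : ∀ k ∈ Icc 1 (p - 1), qN (a * k) ≠ 0 := by
    intro k hk
    rw [Finset.mem_Icc] at hk
    rw [qN, Ne, ← hφ, map_eq_zero_iff φ (RatFunc.algebraMap_injective ℚ)]
    intro h0
    have : Polynomial.eval 1 (qIntP (a * k)) = 0 := by rw [h0]; simp
    rw [qIntP] at this
    simp only [Polynomial.eval_finset_sum, Polynomial.eval_pow, Polynomial.eval_X,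
      one_pow] at this
    rw [Finset.sum_const, nsmul_eq_mul, mul_one, Finset.card_range] at this
    have hak : 0 < a * k := Nat.mul_pos ha (by omega)
    exact (Nat.cast_ne_zero (R := ℚ)).mpr hak.ne' this
  rw [map_sub, sub_mul]
  congr 1
  · -- x * φ B = φ N
    rw [Finset.sum_mul, hN, map_sum]
    apply Finset.sum_congr rfl
    intro k hk
    rw [map_mul, map_pow, hφX]
    have hsplit : φ B = qN (a * k) ^ 2 *
        φ (∏ l ∈ (Icc 1 (p - 1)).erase k, qIntP (a * l) ^ 2) := by
      rw [hB, ← Finset.mul_prod_erase _ (fun l => qIntP (a * l) ^ 2) hk, map_mul, map_pow]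
      rfl
    rw [hsplit]
    have hq := pow_ne_zero 2 (hqN0 k hk)
    rw [div_mul_eq_mul_div, mul_div_assoc, mul_comm (qN (a * k) ^ 2), mul_div_assoc,
      div_self hq, mul_one]
  · -- y * φ B = φ (yP * B)
    rw [hyP, map_mul, map_mul, map_pow, map_sub, map_one, hφX, ← hφ,
      RatFunc.algebraMap_C]
end
end

section
/- Let b, b̄, a, d be non-negative integers with a·d = b + b̄ > 0, and let p > 2 be a prime with gcd(a, p) = 1. Then ∑_{k=1}^{p-1} ((-1)^{d-1} q^{bk} + q^{b̄k}) / [ak]_q^d ≡ b·(1-q)·[p]_q · ∑_{k=1}^{p-1} q^{b̄k}/[ak]_q^d − a·d·[p]_q · ∑_{k=1}^{p-1} q^{b̄k}/[ak]_q^{d+1} (mod [p]_q^2). -/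
open Polynomial Finset

noncomputable section

lemma qIntP_mul_X_sub_one (n : ℕ) : qIntP n * (X - 1) = X ^ n - 1 := by
  simpa [qIntP] using geom_sum_mul (X : Polynomial ℚ) n

lemma X_sub_one_ne_zero : (X - 1 : Polynomial ℚ) ≠ 0 := by
  simpa using X_sub_C_ne_zero (1 : ℚ)

lemma qIntP_add (m n : ℕ) : qIntP (m + n) = qIntP m + X ^ m * qIntP n := by
  unfold qIntP
  rw [← Finset.sum_range_add_sum_Ico _ (Nat.le_add_right m n),
    Finset.sum_Ico_eq_sum_range, Finset.mul_sum]
  simp [pow_add]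

lemma qIntP_mul_p (n p : ℕ) :
    ∃ u : Polynomial ℚ, qIntP (n * p) = (n : Polynomial ℚ) * qIntP p + qIntP p ^ 2 * u := by
  have hG : qIntP (n * p) = qIntP p * ∑ i ∈ Finset.range n, (X ^ p) ^ i := by
    apply mul_right_cancel₀ X_sub_one_ne_zero
    rw [qIntP_mul_X_sub_one, mul_comm (qIntP p), mul_assoc, qIntP_mul_X_sub_one,
      geom_sum_mul, ← pow_mul, mul_comm p n]
  have hdvd : (X ^ p - 1 : Polynomial ℚ) ∣
      (∑ i ∈ Finset.range n, ((X : Polynomial ℚ) ^ p) ^ i) - (n : Polynomial ℚ) := by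
    have : ((n : Polynomial ℚ)) = ∑ i ∈ Finset.range n, (1 : Polynomial ℚ) ^ i := by simp
    rw [this, ← Finset.sum_sub_distrib]
    exact Finset.dvd_sum fun i _ => sub_dvd_pow_sub_pow _ _ i
  obtain ⟨w, hw⟩ := hdvd
  refine ⟨(X - 1) * w, ?_⟩
  rw [hG]
  linear_combination (qIntP p) * hw - (qIntP p * w) * (qIntP_mul_X_sub_one p)

lemma binom1 {R : Type*} [CommRing R] (t : R) (n : ℕ) :
    ∃ c, (1 + t) ^ n = 1 + (n : R) * t + t ^ 2 * c := by
  induction n with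
  | zero => exact ⟨0, by push_cast; ring⟩
  | succ n ih =>
    obtain ⟨c, hc⟩ := ih
    exact ⟨(n : R) + c + c * t, by rw [pow_succ, hc]; push_cast; ring⟩

lemma binom2 {R : Type*} [CommRing R] (x y : R) (e : ℕ) :
    ∃ c, (y - x) ^ (e + 1) =
      (-1 : R) ^ (e + 1) * (x ^ (e + 1) - ((e : R) + 1) * x ^ e * y) + y ^ 2 * c := by
  induction e with
  | zero => exact ⟨0, by push_cast; ring⟩
  | succ e ih =>
    obtain ⟨c, hc⟩ := ih
    refine ⟨(-1 : R) ^ (e + 2) * ((e : R) + 1) * x ^ e + c * (y - x), ?_⟩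
    rw [pow_succ _ (e + 1), hc]
    push_cast
    ring

lemma X_pow_bp (b p : ℕ) :
    ∃ v : Polynomial ℚ, (X : Polynomial ℚ) ^ (b * p) =
      1 + (b : Polynomial ℚ) * (X - 1) * qIntP p + ((X - 1) * qIntP p) ^ 2 * v := by
  have hXp : (X : Polynomial ℚ) ^ p = 1 + (X - 1) * qIntP p := by
    linear_combination - qIntP_mul_X_sub_one p
  obtain ⟨v, hv⟩ := binom1 ((X - 1) * qIntP p) b
  refine ⟨v, ?_⟩
  rw [mul_comm b p, pow_mul, hXp, hv]; ring

lemma key_dvd (a b p e : ℕ) (K : Polynomial ℚ) :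
    qIntP p ^ 2 ∣
      ((-1 : Polynomial ℚ) ^ e * X ^ (b * p) * K ^ (e + 2)
        + (1 + (b : Polynomial ℚ) * (X - 1) * qIntP p) * K * (qIntP (a * p) - K) ^ (e + 1)
        + (a : Polynomial ℚ) * ((e : Polynomial ℚ) + 1) * qIntP p *
            (qIntP (a * p) - K) ^ (e + 1)) := by
  obtain ⟨u, hu⟩ := qIntP_mul_p a p
  obtain ⟨v, hv⟩ := X_pow_bp b p
  obtain ⟨c, hc⟩ := binom2 K (qIntP (a * p)) e
  set P := qIntP p with hP
  set s : Polynomial ℚ := (-1) ^ e with hs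
  refine ⟨s * (X - 1) ^ 2 * v * K ^ (e + 2)
      + s * ((e : Polynomial ℚ) + 1) * K ^ (e + 1) * u
      + s * ((e : Polynomial ℚ) + 1) * (b : Polynomial ℚ) * (X - 1) * K ^ (e + 1) *
          ((a : Polynomial ℚ) + P * u)
      + (1 + (b : Polynomial ℚ) * (X - 1) * P) * K * ((a : Polynomial ℚ) + P * u) ^ 2 * c
      + s * (a : Polynomial ℚ) * ((e : Polynomial ℚ) + 1) ^ 2 * K ^ e *
          ((a : Polynomial ℚ) + P * u)
      + (a : Polynomial ℚ) * ((e : Polynomial ℚ) + 1) * P * ((a : Polynomial ℚ) + P * u) ^ 2 * c,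
    ?_⟩
  rw [hc, hv, hu]
  rcases Nat.even_or_odd e with he | he
  · simp only [hs, he.neg_one_pow, (he.add_one).neg_one_pow]
    ring
  · simp only [hs, he.neg_one_pow, (he.add_one).neg_one_pow]
    ring

lemma qIntP_ne_zero {n : ℕ} (hn : n ≠ 0) : qIntP n ≠ 0 := fun h => by
  have := congrArg (Polynomial.eval (1 : ℚ)) h
  simp [qIntP, Polynomial.eval_finset_sum] at this
  exact hn this

lemma qIntP_coprime {m p : ℕ} (hp : p.Prime) (hm : ¬ p ∣ m) (hm0 : m ≠ 0) :
    IsCoprime (qIntP m) (qIntP p) := by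
  have : Fact p.Prime := ⟨hp⟩
  have h1 : qIntP p = cyclotomic p ℚ := by rw [cyclotomic_prime]; rfl
  have h2 : qIntP m = ∏ i ∈ m.divisors.erase 1, cyclotomic i ℚ := by
    rw [prod_cyclotomic_eq_geom_sum (Nat.pos_of_ne_zero hm0)]; rfl
  rw [h1, h2]
  refine IsCoprime.prod_left fun i hi => cyclotomic.isCoprime_rat fun hip => ?_
  exact hm (hip ▸ (Nat.mem_divisors.mp (Finset.mem_of_mem_erase hi)).1)

lemma X_coprime {p : ℕ} (hp : p ≠ 0) : IsCoprime (X : Polynomial ℚ) (qIntP p) := by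
  obtain ⟨q, rfl⟩ := Nat.exists_eq_succ_of_ne_zero hp
  refine ⟨-qIntP q, 1, ?_⟩
  have h : qIntP (q.succ) = qIntP 1 + X ^ 1 * qIntP q := by
    rw [show q.succ = 1 + q from by omega]; exact qIntP_add 1 q
  have h1 : qIntP 1 = 1 := by simp [qIntP]
  rw [h, h1]; ring

lemma qCong_add {p r : ℕ} {x y x' y' : RatFunc ℚ} (h : qCong p r x y) (h' : qCong p r x' y') :
    qCong p r (x + x') (y + y') := by
  obtain ⟨A, B, hB, hE⟩ := h
  obtain ⟨A', B', hB', hE'⟩ := h'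
  refine ⟨A * B' + A' * B, B * B', hB.mul_left hB', ?_⟩
  simp only [map_mul, map_add, map_pow] at hE hE' ⊢
  linear_combination (algebraMap (Polynomial ℚ) (RatFunc ℚ) B') * hE +
    (algebraMap (Polynomial ℚ) (RatFunc ℚ) B) * hE'

lemma qCong_sum {p r : ℕ} {s : Finset ℕ} {f g : ℕ → RatFunc ℚ}
    (h : ∀ i ∈ s, qCong p r (f i) (g i)) :
    qCong p r (∑ i ∈ s, f i) (∑ i ∈ s, g i) := by
  induction s using Finset.cons_induction with
  | empty => exact ⟨0, 1, isCoprime_one_left, by simp⟩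
  | cons i s his ih =>
    rw [Finset.sum_cons, Finset.sum_cons]
    exact qCong_add (h i (Finset.mem_cons_self i s))
      (ih fun j hj => h j (Finset.mem_cons_of_mem hj))

lemma term_cong (a b bb k j e : ℕ) (hbd : a * (e + 1) = b + bb)
    (hK : IsCoprime (qIntP (a * k)) (qIntP (k + j)))
    (hL : IsCoprime (qIntP (a * j)) (qIntP (k + j)))
    (hXc : IsCoprime (X : Polynomial ℚ) (qIntP (k + j)))
    (hk0 : a * k ≠ 0) (hj0 : a * j ≠ 0) :
    qCong (k + j) 2
      ((-1 : RatFunc ℚ) ^ e * RatFunc.X ^ (b * j) / qN (a * j) ^ (e + 1)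
        + RatFunc.X ^ (bb * k) / qN (a * k) ^ (e + 1))
      ((b : RatFunc ℚ) * (1 - RatFunc.X) * qN (k + j) *
          (RatFunc.X ^ (bb * k) / qN (a * k) ^ (e + 1))
        - (a : RatFunc ℚ) * ((e + 1 : ℕ) : RatFunc ℚ) * qN (k + j) *
          (RatFunc.X ^ (bb * k) / qN (a * k) ^ (e + 1 + 1))) := by
  obtain ⟨W, hW⟩ := key_dvd a b (k + j) e (qIntP (a * k))
  have hMK : qIntP (a * (k + j)) - qIntP (a * k) = X ^ (a * k) * qIntP (a * j) := by
    rw [Nat.mul_add, qIntP_add]; ring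
  have hae : a * k * (e + 1) = b * k + bb * k := by
    rw [show a * k * (e + 1) = a * (e + 1) * k from by ring, hbd]; ring
  rw [hMK, mul_pow, ← pow_mul, hae, pow_add] at hW
  refine ⟨X ^ (bb * k) * W,
    X ^ (b * k + bb * k) * qIntP (a * k) ^ (e + 2) * qIntP (a * j) ^ (e + 1),
    ((hXc.pow_left.mul_left hK.pow_left).mul_left hL.pow_left), ?_⟩
  have hKne : algebraMap (Polynomial ℚ) (RatFunc ℚ) (qIntP (a * k)) ≠ 0 :=
    RatFunc.algebraMap_ne_zero (qIntP_ne_zero hk0)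
  have hLne : algebraMap (Polynomial ℚ) (RatFunc ℚ) (qIntP (a * j)) ≠ 0 :=
    RatFunc.algebraMap_ne_zero (qIntP_ne_zero hj0)
  rw [show qIntP (k + j) ^ 2 * (X ^ (bb * k) * W) = X ^ (bb * k) * (qIntP (k + j) ^ 2 * W) from
    by ring, ← hW]
  simp only [qN, ← RatFunc.algebraMap_X, map_mul, map_add, map_sub, map_pow, map_one,
    map_natCast, map_neg]
  field_simp
  push_cast
  ring

/-- For non-negative integers `b, b̄, a, d` with `a·d = b + b̄ > 0` and a prime
`p > 2` with `gcd(a, p) = 1`: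
`∑_{k=1}^{p-1} ((-1)^{d-1} q^{bk} + q^{b̄k})/[ak]_q^d ≡
  b(1-q)[p]_q ∑_{k=1}^{p-1} q^{b̄k}/[ak]_q^d − ad[p]_q ∑_{k=1}^{p-1} q^{b̄k}/[ak]_q^{d+1}
(mod [p]_q²)`. -/
theorem qHpos (b bb a d : ℕ) (hbd : a * d = b + bb) (hpos : 0 < b + bb)
    (p : ℕ) (hp : p.Prime) (hp2 : 2 < p) (hap : Nat.gcd a p = 1) :
    qCong p 2
      (∑ k ∈ Finset.Icc 1 (p - 1),
        ((-1 : RatFunc ℚ) ^ (d - 1) * RatFunc.X ^ (b * k) + RatFunc.X ^ (bb * k)) /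
          qN (a * k) ^ d)
      ((b : RatFunc ℚ) * (1 - RatFunc.X) * qN p *
          ∑ k ∈ Finset.Icc 1 (p - 1), (RatFunc.X : RatFunc ℚ) ^ (bb * k) / qN (a * k) ^ d
        - (a : RatFunc ℚ) * (d : RatFunc ℚ) * qN p *
          ∑ k ∈ Finset.Icc 1 (p - 1),
            (RatFunc.X : RatFunc ℚ) ^ (bb * k) / qN (a * k) ^ (d + 1)) := by
  have hd0 : d ≠ 0 := by rintro rfl; simp at hbd; omega
  have ha0 : a ≠ 0 := by rintro rfl; simp at hbd; omega
  obtain ⟨e, rfl⟩ := Nat.exists_eq_succ_of_ne_zero hd0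
  simp only [Nat.succ_eq_add_one, Nat.add_sub_cancel] at *
  have hpa : ¬ p ∣ a := by
    intro h
    have h2 : p ∣ Nat.gcd a p := Nat.dvd_gcd h dvd_rfl
    rw [hap, Nat.dvd_one] at h2
    omega
  -- split the left-hand sum
  simp only [add_div]
  rw [Finset.sum_add_distrib]
  -- reindex the first sum by k ↦ p - k
  rw [show (∑ k ∈ Finset.Icc 1 (p - 1),
        (-1 : RatFunc ℚ) ^ e * RatFunc.X ^ (b * k) / qN (a * k) ^ (e + 1))
      = ∑ k ∈ Finset.Icc 1 (p - 1),
        (-1 : RatFunc ℚ) ^ e * RatFunc.X ^ (b * (p - k)) / qN (a * (p - k)) ^ (e + 1) from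
    Finset.sum_nbij' (fun k => p - k) (fun k => p - k)
      (fun x hx => by simp only [Finset.mem_Icc] at *; omega)
      (fun x hx => by simp only [Finset.mem_Icc] at *; omega)
      (fun x hx => by simp only [Finset.mem_Icc] at *; omega)
      (fun x hx => by simp only [Finset.mem_Icc] at *; omega)
      (fun x hx => by
        simp only [Finset.mem_Icc] at hx
        simp only [show p - (p - x) = x from by omega])]
  rw [← Finset.sum_add_distrib, Finset.mul_sum, Finset.mul_sum, ← Finset.sum_sub_distrib]
  apply qCong_sum
  intro k hk
  simp only [Finset.mem_Icc] at hk
  obtain ⟨j, hj⟩ : ∃ j, j = p - k := ⟨_, rfl⟩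
  rw [← hj]
  have hkj : p = k + j := by omega
  have hpk : ¬ p ∣ a * k := by
    intro h
    rcases (Nat.Prime.dvd_mul hp).mp h with h | h
    · exact hpa h
    · have := Nat.le_of_dvd (by omega) h; omega
  have hpj : ¬ p ∣ a * j := by
    intro h
    rcases (Nat.Prime.dvd_mul hp).mp h with h | h
    · exact hpa h
    · have := Nat.le_of_dvd (by omega) h; omega
  have hk0 : a * k ≠ 0 := Nat.mul_ne_zero ha0 (by omega)
  have hj0 : a * j ≠ 0 := Nat.mul_ne_zero ha0 (by omega)
  have hcK : IsCoprime (qIntP (a * k)) (qIntP p) := qIntP_coprime hp hpk hk0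
  have hcL : IsCoprime (qIntP (a * j)) (qIntP p) := qIntP_coprime hp hpj hj0
  have hcX : IsCoprime (X : Polynomial ℚ) (qIntP p) := X_coprime (by omega)
  rw [hkj] at hcK hcL hcX ⊢
  exact term_cong a b bb k j e hbd hcK hcL hcX hk0 hj0
end
end

section
/- Let p be a prime and let a be a positive integer. For every k with 1 ≤ k ≤ p-1, the Gaussian q-binomial coefficient satisfies binom_q(ap−1, k) ≡ (-1)^k · q^{−C(k+1,2)} · (1 − a·[p]_q · ∑_{j=1}^{k} 1/[j]_q) (mod [p]_q^2). -/
open Polynomial Finset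

noncomputable section

namespace QAux

local notation "φ" => algebraMap (Polynomial ℚ) (RatFunc ℚ)

lemma qIntP_mul_X_sub_one (n : ℕ) : qIntP n * (X - 1) = X ^ n - 1 := geom_sum_mul X n

lemma one_sub_X_pow (n : ℕ) : (1 : ℚ[X]) - X ^ n = (1 - X) * qIntP n := by
  have h := geom_sum_mul (X : ℚ[X]) n
  unfold qIntP
  linear_combination h

lemma qIntP_eval_one (n : ℕ) : (qIntP n).eval 1 = n := by simp [qIntP]

lemma qIntP_ne_zero {n : ℕ} (h : 0 < n) : qIntP n ≠ 0 := by
  intro hq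
  have h1 := qIntP_eval_one n
  rw [hq] at h1
  simp only [Polynomial.eval_zero] at h1
  exact absurd h1.symm (by exact_mod_cast h.ne')

lemma qIntP_natDegree {n : ℕ} (h : 0 < n) : (qIntP n).natDegree = n - 1 := by
  have h1 := qIntP_mul_X_sub_one n
  have hX : (X - 1 : ℚ[X]) ≠ 0 := by
    have := Polynomial.X_sub_C_ne_zero (R := ℚ) 1
    simpa using this
  have h2 : (X ^ n - 1 : ℚ[X]).natDegree = n := by
    simpa using Polynomial.natDegree_X_pow_sub_C (n := n) (r := (1 : ℚ))
  have h3 := Polynomial.natDegree_mul (qIntP_ne_zero h) hX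
  rw [h1, h2] at h3
  have h4 : (X - 1 : ℚ[X]).natDegree = 1 := by
    simpa using Polynomial.natDegree_X_sub_C (1 : ℚ)
  rw [h4] at h3
  omega

lemma qIntP_prime {p : ℕ} (hp : p.Prime) : Prime (qIntP p) := by
  haveI : Fact p.Prime := ⟨hp⟩
  have h : qIntP p = cyclotomic p ℚ := by rw [Polynomial.cyclotomic_prime]; rfl
  rw [h]
  exact (cyclotomic.irreducible_rat hp.pos).prime

lemma not_dvd_of_lt {p : ℕ} (hp : p.Prime) {f : ℚ[X]} (hf : f ≠ 0)
    (hd : f.natDegree < p - 1) : ¬ qIntP p ∣ f := fun h =>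
  absurd (Polynomial.natDegree_le_of_dvd h hf)
    (by rw [qIntP_natDegree hp.pos]; omega)

lemma pi_coeff_zero {p : ℕ} (hp : 0 < p) : (qIntP p).coeff 0 = 1 := by
  unfold qIntP
  rw [Polynomial.finset_sum_coeff]
  simp [Polynomial.coeff_X_pow, Finset.sum_ite_eq, hp]

lemma pi_not_dvd_X_pow {p : ℕ} (hp : p.Prime) (m : ℕ) : ¬ qIntP p ∣ (X ^ m : ℚ[X]) := by
  intro h
  have hX : qIntP p ∣ (X : ℚ[X]) := (qIntP_prime hp).dvd_of_dvd_pow h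
  obtain ⟨g, hg⟩ := hX
  have h0 : g.coeff 0 = 0 := by
    have hc := congrArg (fun f : ℚ[X] => f.coeff 0) hg
    simp only [Polynomial.coeff_X_zero, Polynomial.mul_coeff_zero,
      pi_coeff_zero hp.pos, one_mul] at hc
    exact hc.symm
  obtain ⟨g', rfl⟩ := Polynomial.X_dvd_iff.mpr h0
  have hcan : (X : ℚ[X]) * 1 = X * (qIntP p * g') := by linear_combination hg
  have h1 : (1 : ℚ[X]) = qIntP p * g' := mul_left_cancel₀ Polynomial.X_ne_zero hcan
  exact (qIntP_prime hp).not_dvd_one ⟨g', h1⟩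

lemma pi_not_dvd_one_sub_X {p : ℕ} (hp : p.Prime) : ¬ qIntP p ∣ (1 - X : ℚ[X]) := by
  intro h
  have hne : (1 - X : ℚ[X]) ≠ 0 := by
    intro h0
    have := congrArg (Polynomial.eval 0) h0
    simp at this
  have hd := Polynomial.natDegree_le_of_dvd h hne
  rw [qIntP_natDegree hp.pos] at hd
  have hdeg : (1 - X : ℚ[X]).natDegree = 1 := by
    have he : (1 - X : ℚ[X]) = -(X - C 1) := by rw [map_one]; ring
    rw [he, Polynomial.natDegree_neg, Polynomial.natDegree_X_sub_C]
  rw [hdeg] at hd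
  have hp2 : p = 2 := by have := hp.two_le; omega
  subst hp2
  obtain ⟨g, hg⟩ := h
  have h2 : qIntP 2 = 1 + X := by
    unfold qIntP
    rw [Finset.sum_range_succ, Finset.sum_range_one]
    simp
  rw [h2] at hg
  have := congrArg (Polynomial.eval (-1)) hg
  simp at this

lemma pi_not_dvd_qIntP {p : ℕ} (hp : p.Prime) {j : ℕ} (h1 : 0 < j) (h2 : j ≤ p - 1) :
    ¬ qIntP p ∣ qIntP j :=
  not_dvd_of_lt hp (qIntP_ne_zero h1)
    (by rw [qIntP_natDegree h1]; have := hp.two_le; omega)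

lemma pi_not_dvd_one_sub_X_pow {p : ℕ} (hp : p.Prime) {j : ℕ} (h1 : 0 < j)
    (h2 : j ≤ p - 1) : ¬ qIntP p ∣ (1 - X ^ j : ℚ[X]) := by
  rw [one_sub_X_pow]
  intro h
  rcases ((qIntP_prime hp).dvd_mul).mp h with h' | h'
  · exact pi_not_dvd_one_sub_X hp h'
  · exact pi_not_dvd_qIntP hp h1 h2 h'

lemma one_sub_X_pow_ne_zero {j : ℕ} (hj : 0 < j) : (1 - X ^ j : ℚ[X]) ≠ 0 := by
  intro h0
  have := congrArg (Polynomial.eval 0) h0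
  simp [Polynomial.eval_pow, zero_pow hj.ne'] at this

/-- `x` is, locally at `[p]_q`, divisible by `[p]_q^r`. -/
def PDiv (p r : ℕ) (x : RatFunc ℚ) : Prop :=
  ∃ a b : Polynomial ℚ, ¬ qIntP p ∣ b ∧
    x * φ b = φ (qIntP p ^ r * a)

variable {p : ℕ}

lemma pdiv_zero (hπ : Prime (qIntP p)) (r : ℕ) : PDiv p r 0 :=
  ⟨0, 1, by simpa using hπ.not_dvd_one, by simp⟩

lemma pdiv_add (hπ : Prime (qIntP p)) {r : ℕ} {x y : RatFunc ℚ}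
    (hx : PDiv p r x) (hy : PDiv p r y) : PDiv p r (x + y) := by
  obtain ⟨a1, b1, h1, e1⟩ := hx
  obtain ⟨a2, b2, h2, e2⟩ := hy
  refine ⟨a1 * b2 + a2 * b1, b1 * b2, fun h => (hπ.dvd_mul.mp h).elim h1 h2, ?_⟩
  simp only [map_mul, map_add, map_pow] at e1 e2 ⊢
  ring_nf
  ring_nf at e1 e2
  linear_combination (φ b2) * e1 + (φ b1) * e2

lemma pdiv_neg (hπ : Prime (qIntP p)) {r : ℕ} {x : RatFunc ℚ}
    (hx : PDiv p r x) : PDiv p r (-x) := by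
  obtain ⟨a1, b1, h1, e1⟩ := hx
  refine ⟨-a1, b1, h1, ?_⟩
  simp only [map_mul, map_neg] at e1 ⊢
  linear_combination -e1

lemma pdiv_sub (hπ : Prime (qIntP p)) {r : ℕ} {x y : RatFunc ℚ}
    (hx : PDiv p r x) (hy : PDiv p r y) : PDiv p r (x - y) := by
  rw [sub_eq_add_neg]; exact pdiv_add hπ hx (pdiv_neg hπ hy)

lemma pdiv_mul (hπ : Prime (qIntP p)) {r s : ℕ} {x y : RatFunc ℚ}
    (hx : PDiv p r x) (hy : PDiv p s y) : PDiv p (r + s) (x * y) := by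
  obtain ⟨a1, b1, h1, e1⟩ := hx
  obtain ⟨a2, b2, h2, e2⟩ := hy
  refine ⟨a1 * a2, b1 * b2, fun h => (hπ.dvd_mul.mp h).elim h1 h2, ?_⟩
  simp only [map_mul, map_pow, pow_add] at e1 e2 ⊢
  linear_combination (y * φ b2) * e1 + (φ (qIntP p) ^ r * φ a1) * e2

lemma pdiv_mul_int (hπ : Prime (qIntP p)) {r : ℕ} {x y : RatFunc ℚ}
    (hx : PDiv p 0 x) (hy : PDiv p r y) : PDiv p r (x * y) := by
  have := pdiv_mul hπ hx hy
  simpa using this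

lemma pdiv_poly (f : ℚ[X]) (hπ : Prime (qIntP p)) : PDiv p 0 (φ f) :=
  ⟨f, 1, by simpa using hπ.not_dvd_one, by simp⟩

lemma pdiv_one (hπ : Prime (qIntP p)) : PDiv p 0 (1 : RatFunc ℚ) := by
  simpa using pdiv_poly 1 hπ

lemma pdiv_inv (hπ : Prime (qIntP p)) {b : ℚ[X]} (hb : ¬ qIntP p ∣ b) :
    PDiv p 0 (φ b)⁻¹ := by
  have hb0 : b ≠ 0 := by rintro rfl; exact hb (dvd_zero _)
  refine ⟨1, b, hb, ?_⟩
  rw [inv_mul_cancel₀ (RatFunc.algebraMap_ne_zero hb0)]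
  simp

lemma pdiv_mono (hπ : Prime (qIntP p)) {r s : ℕ} (hrs : s ≤ r) {x : RatFunc ℚ}
    (hx : PDiv p r x) : PDiv p s x := by
  obtain ⟨a1, b1, h1, e1⟩ := hx
  refine ⟨qIntP p ^ (r - s) * a1, b1, h1, ?_⟩
  rw [e1]
  congr 1
  rw [← mul_assoc, ← pow_add]
  congr 2
  omega

lemma pdiv_sum (hπ : Prime (qIntP p)) {r : ℕ} {s : Finset ℕ} {f : ℕ → RatFunc ℚ}
    (hf : ∀ j ∈ s, PDiv p r (f j)) : PDiv p r (∑ j ∈ s, f j) := by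
  classical
  induction s using Finset.cons_induction with
  | empty => simpa using pdiv_zero hπ r
  | cons i s his ih =>
    rw [Finset.sum_cons]
    exact pdiv_add hπ (hf i (Finset.mem_cons_self i s))
      (ih fun j hj => hf j (Finset.mem_cons_of_mem hj))

lemma pdiv_prod (hπ : Prime (qIntP p)) {s : Finset ℕ} {f : ℕ → RatFunc ℚ}
    (hf : ∀ j ∈ s, PDiv p 0 (f j)) : PDiv p 0 (∏ j ∈ s, f j) := by
  classical
  induction s using Finset.cons_induction with
  | empty => simpa using pdiv_one hπ
  | cons i s his ih =>
    rw [Finset.prod_cons]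
    exact pdiv_mul_int hπ (hf i (Finset.mem_cons_self i s))
      (ih fun j hj => hf j (Finset.mem_cons_of_mem hj))

lemma pdiv_prod_sub (hπ : Prime (qIntP p)) {s : Finset ℕ} {f g : ℕ → RatFunc ℚ}
    (hf : ∀ j ∈ s, PDiv p 0 (f j)) (hg : ∀ j ∈ s, PDiv p 0 (g j))
    (h : ∀ j ∈ s, PDiv p 2 (f j - g j)) :
    PDiv p 2 (∏ j ∈ s, f j - ∏ j ∈ s, g j) := by
  classical
  induction s using Finset.cons_induction with
  | empty => simpa using pdiv_zero hπ 2
  | cons i s his ih =>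
    rw [Finset.prod_cons, Finset.prod_cons]
    have key : f i * ∏ j ∈ s, f j - g i * ∏ j ∈ s, g j
        = f i * (∏ j ∈ s, f j - ∏ j ∈ s, g j) + (f i - g i) * ∏ j ∈ s, g j := by ring
    rw [key]
    refine pdiv_add hπ ?_ ?_
    · exact pdiv_mul_int hπ (hf i (Finset.mem_cons_self i s))
        (ih (fun j hj => hf j (Finset.mem_cons_of_mem hj))
          (fun j hj => hg j (Finset.mem_cons_of_mem hj))
          (fun j hj => h j (Finset.mem_cons_of_mem hj)))
    · have h2 : PDiv p 2 ((f i - g i) * ∏ j ∈ s, g j) := by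
        have := pdiv_mul hπ (h i (Finset.mem_cons_self i s))
          (pdiv_prod hπ fun j hj => hg j (Finset.mem_cons_of_mem hj))
        simpa using this
      exact h2

lemma pdiv_one_sub_prod (hπ : Prime (qIntP p)) {s : Finset ℕ} {t : ℕ → RatFunc ℚ}
    (ht : ∀ j ∈ s, PDiv p 1 (t j)) :
    PDiv p 2 ((∏ j ∈ s, (1 - t j)) - (1 - ∑ j ∈ s, t j)) := by
  classical
  induction s using Finset.cons_induction with
  | empty => simpa using pdiv_zero hπ 2
  | cons i s his ih =>
    rw [Finset.prod_cons, Finset.sum_cons]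
    have key : (1 - t i) * ∏ j ∈ s, (1 - t j) - (1 - (t i + ∑ j ∈ s, t j))
        = (1 - t i) * ((∏ j ∈ s, (1 - t j)) - (1 - ∑ j ∈ s, t j))
          + t i * ∑ j ∈ s, t j := by ring
    rw [key]
    refine pdiv_add hπ ?_ ?_
    · refine pdiv_mul_int hπ ?_ (ih fun j hj => ht j (Finset.mem_cons_of_mem hj))
      exact pdiv_sub hπ (pdiv_one hπ)
        (pdiv_mono hπ (by omega) (ht i (Finset.mem_cons_self i s)))
    · have := pdiv_mul hπ (ht i (Finset.mem_cons_self i s))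
        (pdiv_sum hπ fun j hj => ht j (Finset.mem_cons_of_mem hj))
      simpa using this

lemma pdiv_div (hπ : Prime (qIntP p)) {r : ℕ} {x : RatFunc ℚ} (hx : PDiv p r x)
    {b : ℚ[X]} (hb : ¬ qIntP p ∣ b) : PDiv p r (x / φ b) := by
  rw [div_eq_mul_inv, mul_comm]
  exact pdiv_mul_int hπ (pdiv_inv hπ hb) hx

lemma key_gen {R : Type*} [CommRing R] (y : R) :
    ∀ a : ℕ, ∃ h : R, (1 : R) - y ^ a - (a : R) * (1 - y) = (1 - y) ^ 2 * h
  | 0 => ⟨0, by simp⟩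
  | (n + 1) => by
    obtain ⟨h, e⟩ := key_gen y n
    refine ⟨h - ∑ i ∈ Finset.range n, y ^ i, ?_⟩
    have hg := geom_sum_mul y n
    push_cast [pow_succ]
    linear_combination e - (1 - y) * hg

lemma prod_ne_zero (t : ℕ) : (∏ j ∈ Finset.range t, ((1 : ℚ[X]) - X ^ (j + 1))) ≠ 0 := by
  rw [Finset.prod_ne_zero_iff]
  exact fun j _ => one_sub_X_pow_ne_zero (Nat.succ_pos j)

lemma qbin_prod {n k : ℕ} (hk : k ≤ n) :
    qbin n k = ∏ j ∈ Icc 1 k, (φ (1 - X ^ (n + 1 - j)) / φ (1 - X ^ j)) := by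
  have hm : n - k + k = n := by omega
  have h1 := Finset.prod_range_add (fun j => (1:ℚ[X]) - X ^ (j+1)) (n-k) k
  rw [hm] at h1
  have hrefl : (∏ i ∈ Finset.range k, ((1:ℚ[X]) - X ^ (n - k + i + 1)))
      = ∏ i ∈ Finset.range k, ((1:ℚ[X]) - X ^ (n - i)) := by
    rw [← Finset.prod_range_reflect (fun i => (1:ℚ[X]) - X ^ (n - i)) k]
    refine Finset.prod_congr rfl fun i hi => ?_
    rw [Finset.mem_range] at hi
    congr 2
    omega
  have hPmK : φ (∏ j ∈ Finset.range (n-k), ((1:ℚ[X]) - X ^ (j+1))) ≠ 0 :=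
    RatFunc.algebraMap_ne_zero (prod_ne_zero (n - k))
  unfold qbin qqPoch
  rw [if_pos hk, h1, hrefl]
  rw [map_mul]
  rw [mul_comm (φ (∏ j ∈ Finset.range k, ((1:ℚ[X]) - X ^ (j+1))))]
  rw [mul_div_mul_left _ _ hPmK]
  rw [← Finset.Ico_add_one_right_eq_Icc, Finset.prod_Ico_eq_prod_range]
  rw [map_prod, map_prod]
  rw [← Finset.prod_div_distrib]
  refine Finset.prod_congr rfl fun i hi => ?_
  rw [Finset.mem_range] at hi
  have e1 : n + 1 - (1 + i) = n - i := by omega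
  have e2 : 1 + i = i + 1 := by omega
  rw [e1, e2]

lemma sum_Icc_id (k : ℕ) : ∑ j ∈ Icc 1 k, j = (k + 1).choose 2 := by
  induction k with
  | zero => simp
  | succ n ih =>
    rw [Finset.sum_Icc_succ_top (by omega : 1 ≤ n + 1), ih]
    rw [Nat.choose_succ_succ (n + 1) 1]
    simp [Nat.choose_one_right]
    ring

lemma factor_cong {a : ℕ} (hp : p.Prime) (ha : 0 < a) {j : ℕ} (h1 : 0 < j)
    (h2 : j ≤ p - 1) :
    PDiv p 2 (φ (1 - X ^ (a * p - j)) / φ (1 - X ^ j)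
      - (-((φ (X ^ j))⁻¹ * (1 - (a : RatFunc ℚ) * φ (qIntP p) / φ (qIntP j))))) := by
  have hπ := qIntP_prime hp
  obtain ⟨h, e⟩ := key_gen (X ^ p : ℚ[X]) a
  have hd : a * p - j + j = a * p := by
    have hpa : p ≤ a * p := Nat.le_mul_of_pos_left p ha
    have := hp.two_le
    omega
  refine ⟨(1 - X) ^ 2 * h, X ^ j * (1 - X ^ j), ?_, ?_⟩
  · intro hdvd
    rcases hπ.dvd_mul.mp hdvd with h' | h'
    · exact pi_not_dvd_X_pow hp j h'
    · exact pi_not_dvd_one_sub_X_pow hp h1 h2 h'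
  · have hone : (1 - X : ℚ[X]) ≠ 0 := by
      intro h0
      have := congrArg (Polynomial.eval 0) h0
      simp at this
    have hpow : (X : ℚ[X]) ^ (a * p - j) * X ^ j = (X ^ p) ^ a := by
      rw [← pow_add, hd, mul_comm a p, pow_mul]
    have key : ((1 : ℚ[X]) - X ^ (a * p - j)) * X ^ j
        = X ^ j - 1 + (a : ℚ[X]) * ((1 - X) * qIntP p) + ((1 - X) * qIntP p) ^ 2 * h := by
      rw [← one_sub_X_pow]
      linear_combination e - hpow
    have KK := congrArg φ key
    simp only [map_mul, map_add, map_sub, map_pow, map_one, map_natCast] at KK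
    have AA : (1 : RatFunc ℚ) - (φ (X : ℚ[X])) ^ j = (1 - φ (X : ℚ[X])) * φ (qIntP j) := by
      have := congrArg φ (one_sub_X_pow j)
      simpa only [map_mul, map_sub, map_pow, map_one] using this
    have hv : (1 : RatFunc ℚ) - (φ (X : ℚ[X])) ^ j ≠ 0 := by
      have := RatFunc.algebraMap_ne_zero (one_sub_X_pow_ne_zero h1)
      simpa only [map_sub, map_pow, map_one] using this
    have hx : (φ (X : ℚ[X])) ≠ 0 := RatFunc.algebraMap_ne_zero Polynomial.X_ne_zero
    have hsj : φ (qIntP j) ≠ 0 := RatFunc.algebraMap_ne_zero (qIntP_ne_zero h1)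
    simp only [map_mul, map_sub, map_pow, map_one]
    simp only [RatFunc.algebraMap_X] at KK AA hv hx ⊢
    have iv := mul_inv_cancel₀ hv
    have ixj := mul_inv_cancel₀ (pow_ne_zero j hx)
    have isj := mul_inv_cancel₀ hsj
    rw [div_eq_mul_inv, div_eq_mul_inv]
    linear_combination ((1 - RatFunc.X ^ (a*p - j)) * RatFunc.X ^ j) * iv
      + ((1 - (RatFunc.X : RatFunc ℚ) ^ j)
          - (a : RatFunc ℚ) * φ (qIntP p) * (1 - RatFunc.X)
              * (φ (qIntP j) * (φ (qIntP j))⁻¹ - 1)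
          - (a : RatFunc ℚ) * φ (qIntP p) * (1 - RatFunc.X)) * ixj
      - ((a : RatFunc ℚ) * φ (qIntP p) * (1 - RatFunc.X)) * isj
      - ((a : RatFunc ℚ) * φ (qIntP p) * (φ (qIntP j))⁻¹
          * ((RatFunc.X : RatFunc ℚ) ^ j)⁻¹ * RatFunc.X ^ j) * AA
      + KK

end QAux

open QAux

local notation "φ" => algebraMap (Polynomial ℚ) (RatFunc ℚ)

/-- For a prime `p`, a positive integer `a`, and `1 ≤ k ≤ p-1`:
`binom_q(ap−1, k) ≡ (-1)^k q^{−C(k+1,2)} (1 − a[p]_q ∑_{j=1}^{k} 1/[j]_q)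
(mod [p]_q²)`. -/
theorem qbin_ap_sub_one (p a : ℕ) (hp : p.Prime) (ha : 0 < a)
    (k : ℕ) (hk1 : 1 ≤ k) (hk : k ≤ p - 1) :
    qCong p 2 (qbin (a * p - 1) k)
      ((-1 : RatFunc ℚ) ^ k * (RatFunc.X : RatFunc ℚ) ^ (-((k + 1).choose 2 : ℤ)) *
        (1 - (a : RatFunc ℚ) * qN p * ∑ j ∈ Finset.Icc 1 k, 1 / qN j)) := by
  classical
  have hπ := QAux.qIntP_prime hp
  have hp2 := hp.two_le
  have hpa : p ≤ a * p := Nat.le_mul_of_pos_left p ha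
  have hkn : k ≤ a * p - 1 := by omega
  have hsucc : a * p - 1 + 1 = a * p := by omega
  have hq := QAux.qbin_prod (n := a * p - 1) (k := k) hkn
  rw [hsucc] at hq
  have hmem : ∀ j ∈ Finset.Icc 1 k, 0 < j ∧ j ≤ p - 1 := fun j hj => by
    rw [Finset.mem_Icc] at hj; omega
  have hXc : (RatFunc.X : RatFunc ℚ) ^ (-(((k + 1).choose 2 : ℕ) : ℤ))
      = (φ ((X : ℚ[X]) ^ (k + 1).choose 2))⁻¹ := by
    rw [zpow_neg, zpow_natCast, map_pow, RatFunc.algebraMap_X]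
  -- A: the product of the G's
  have hprodG : (∏ j ∈ Finset.Icc 1 k,
        (-((φ ((X : ℚ[X]) ^ j))⁻¹ * (1 - (a : RatFunc ℚ) * φ (qIntP p) / φ (qIntP j)))))
      = (-1 : RatFunc ℚ) ^ k * (RatFunc.X : RatFunc ℚ) ^ (-(((k + 1).choose 2 : ℕ) : ℤ))
        * ∏ j ∈ Finset.Icc 1 k, (1 - (a : RatFunc ℚ) * φ (qIntP p) / φ (qIntP j)) := by
    rw [hXc]
    have h1 : ∀ j ∈ Finset.Icc 1 k,
        (-((φ ((X : ℚ[X]) ^ j))⁻¹ * (1 - (a : RatFunc ℚ) * φ (qIntP p) / φ (qIntP j))))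
        = (-1 : RatFunc ℚ) * ((φ ((X : ℚ[X]) ^ j))⁻¹
            * (1 - (a : RatFunc ℚ) * φ (qIntP p) / φ (qIntP j))) := fun j _ => by ring
    rw [Finset.prod_congr rfl h1, Finset.prod_mul_distrib, Finset.prod_mul_distrib]
    rw [Finset.prod_const, Nat.card_Icc]
    have h2 : (∏ j ∈ Finset.Icc 1 k, ((φ ((X : ℚ[X]) ^ j))⁻¹ : RatFunc ℚ))
        = (φ ((X : ℚ[X]) ^ (k + 1).choose 2))⁻¹ := by
      rw [Finset.prod_inv_distrib, ← map_prod, Finset.prod_pow_eq_pow_sum,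
        QAux.sum_Icc_id]
    rw [h2, Nat.add_sub_cancel]
    ring
  -- B: rewriting the stated right-hand side
  have hsum : (a : RatFunc ℚ) * qN p * ∑ j ∈ Finset.Icc 1 k, 1 / qN j
      = ∑ j ∈ Finset.Icc 1 k, (a : RatFunc ℚ) * φ (qIntP p) / φ (qIntP j) := by
    unfold qN
    rw [Finset.mul_sum]
    exact Finset.sum_congr rfl fun j _ => by rw [mul_one_div]
  -- PDiv facts
  have hF0 : ∀ j ∈ Finset.Icc 1 k,
      QAux.PDiv p 0 (φ (1 - X ^ (a * p - j)) / φ (1 - X ^ j)) := fun j hj =>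
    QAux.pdiv_div hπ (QAux.pdiv_poly _ hπ)
      (QAux.pi_not_dvd_one_sub_X_pow hp (hmem j hj).1 (hmem j hj).2)
  have ht1 : ∀ j ∈ Finset.Icc 1 k,
      QAux.PDiv p 1 ((a : RatFunc ℚ) * φ (qIntP p) / φ (qIntP j)) := fun j hj => by
    refine QAux.pdiv_div hπ ?_ (QAux.pi_not_dvd_qIntP hp (hmem j hj).1 (hmem j hj).2)
    refine ⟨(a : ℚ[X]), 1, by simpa using hπ.not_dvd_one, ?_⟩
    rw [map_mul, map_natCast, pow_one, map_one, mul_one]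
    ring
  have hG0 : ∀ j ∈ Finset.Icc 1 k,
      QAux.PDiv p 0 (-((φ ((X : ℚ[X]) ^ j))⁻¹
        * (1 - (a : RatFunc ℚ) * φ (qIntP p) / φ (qIntP j)))) := fun j hj =>
    QAux.pdiv_neg hπ (QAux.pdiv_mul_int hπ
      (QAux.pdiv_inv hπ (QAux.pi_not_dvd_X_pow hp j))
      (QAux.pdiv_sub hπ (QAux.pdiv_one hπ)
        (QAux.pdiv_mono hπ (by omega) (ht1 j hj))))
  have hFG : ∀ j ∈ Finset.Icc 1 k,
      QAux.PDiv p 2 (φ (1 - X ^ (a * p - j)) / φ (1 - X ^ j)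
        - (-((φ ((X : ℚ[X]) ^ j))⁻¹
            * (1 - (a : RatFunc ℚ) * φ (qIntP p) / φ (qIntP j))))) := fun j hj =>
    QAux.factor_cong hp ha (hmem j hj).1 (hmem j hj).2
  -- the decomposition of the difference
  have hsplit : qbin (a * p - 1) k
      - ((-1 : RatFunc ℚ) ^ k * (RatFunc.X : RatFunc ℚ) ^ (-((k + 1).choose 2 : ℤ)) *
        (1 - (a : RatFunc ℚ) * qN p * ∑ j ∈ Finset.Icc 1 k, 1 / qN j))
      = ((∏ j ∈ Finset.Icc 1 k, (φ (1 - X ^ (a * p - j)) / φ (1 - X ^ j)))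
          - ∏ j ∈ Finset.Icc 1 k,
              (-((φ ((X : ℚ[X]) ^ j))⁻¹
                * (1 - (a : RatFunc ℚ) * φ (qIntP p) / φ (qIntP j)))))
        + ((-1 : RatFunc ℚ) ^ k
              * (RatFunc.X : RatFunc ℚ) ^ (-(((k + 1).choose 2 : ℕ) : ℤ)))
          * ((∏ j ∈ Finset.Icc 1 k,
                (1 - (a : RatFunc ℚ) * φ (qIntP p) / φ (qIntP j)))
            - (1 - ∑ j ∈ Finset.Icc 1 k,
                (a : RatFunc ℚ) * φ (qIntP p) / φ (qIntP j))) := by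
    rw [hq, hsum, hprodG]
    push_cast
    ring
  have main : QAux.PDiv p 2 (qbin (a * p - 1) k
      - ((-1 : RatFunc ℚ) ^ k * (RatFunc.X : RatFunc ℚ) ^ (-((k + 1).choose 2 : ℤ)) *
        (1 - (a : RatFunc ℚ) * qN p * ∑ j ∈ Finset.Icc 1 k, 1 / qN j))) := by
    rw [hsplit]
    refine QAux.pdiv_add hπ (QAux.pdiv_prod_sub hπ hF0 hG0 hFG) ?_
    refine QAux.pdiv_mul_int hπ ?_ (QAux.pdiv_one_sub_prod hπ ht1)
    have hu : ((-1 : RatFunc ℚ) ^ k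
          * (RatFunc.X : RatFunc ℚ) ^ (-(((k + 1).choose 2 : ℕ) : ℤ)))
        = φ ((-1 : ℚ[X]) ^ k) * (φ ((X : ℚ[X]) ^ (k + 1).choose 2))⁻¹ := by
      rw [map_pow, map_neg, map_one, hXc]
    rw [hu]
    exact QAux.pdiv_mul_int hπ (QAux.pdiv_poly _ hπ)
      (QAux.pdiv_inv hπ (QAux.pi_not_dvd_X_pow hp _))
  obtain ⟨A, B, hB, e⟩ := main
  exact ⟨A, B, ((hπ.coprime_iff_not_dvd).mpr hB).symm, e⟩
end
end
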